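/- arXiv:1901.07324 — 10 statements merged into one kernel-verified Lean document; each statement's English description precedes it below -/
import Mathlib

section
/- For any real numbers y₁, …, y_d in [0, π) with d ≥ 2, the product over all pairs 1 ≤ j < k ≤ d of sin²(y_j − y_k) is at most 2^(−d(d−1)) · d^d. -/
open Real Finset
open scoped ComplexOrder

lemma normSq_exp_sub (u v : ℝ) :
    Complex.normSq (Complex.exp ((2*u : ℝ) * Complex.I) - Complex.exp ((2*v:ℝ) * Complex.I))
      = 4 * Real.sin (u - v) ^ 2 := by
  simp only [Complex.normSq_apply, Complex.sub_re, Complex.sub_im,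
    Complex.exp_ofReal_mul_I_re, Complex.exp_ofReal_mul_I_im]
  have h1 := Real.cos_sub (2*u) (2*v)
  have h2 : Real.cos (2*u - 2*v) = 1 - 2 * Real.sin (u - v) ^ 2 := by
    have h : 2*u - 2*v = 2*(u-v) := by ring
    rw [h, Real.cos_two_mul]
    have := Real.sin_sq_add_cos_sq (u - v)
    nlinarith
  have h3 := Real.sin_sq_add_cos_sq (2*u)
  have h4 := Real.sin_sq_add_cos_sq (2*v)
  nlinarith

lemma prod_pairs {M : Type*} [CommMonoid M] {d : ℕ} (f : Fin d → Fin d → M) :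
    ∏ p ∈ Finset.univ.filter (fun p : Fin d × Fin d => p.1 < p.2), f p.1 p.2
      = ∏ i, ∏ j ∈ Finset.Ioi i, f i j := by
  rw [Finset.prod_sigma']
  exact Finset.prod_nbij' (fun p => ⟨p.1, p.2⟩) (fun x => (x.1, x.2))
    (by simp [Finset.mem_Ioi]) (by simp [Finset.mem_Ioi]) (by simp) (by simp) (by simp)

lemma trace_eq_sum_eig {d : ℕ} {A : Matrix (Fin d) (Fin d) ℂ} (hA : A.IsHermitian) :
    A.trace = ∑ i, (hA.eigenvalues i : ℂ) := by
  exact hA.trace_eq_sum_eigenvalues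

lemma amgm {d : ℕ} (hd : 0 < d) (lam : Fin d → ℝ) (h0 : ∀ i, 0 ≤ lam i)
    (hs : ∑ i, lam i = (d : ℝ)^2) : ∏ i, lam i ≤ (d : ℝ)^d := by
  have key := Real.geom_mean_le_arith_mean (Finset.univ : Finset (Fin d)) (fun _ => 1) lam
    (fun _ _ => zero_le_one) (by simp [hd]) (fun i _ => h0 i)
  simp only [Real.rpow_one, one_mul, Finset.sum_const, Finset.card_univ, Fintype.card_fin,
    nsmul_eq_mul, mul_one, hs] at key
  have hP : 0 ≤ ∏ i, lam i := Finset.prod_nonneg (fun i _ => h0 i)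
  have h2 : ((∏ i, lam i) ^ ((d:ℝ))⁻¹) ^ d ≤ (d:ℝ)^d := by
    apply pow_le_pow_left₀ (Real.rpow_nonneg hP _)
    calc (∏ i, lam i) ^ ((d:ℝ))⁻¹ ≤ (d:ℝ)^2 / d := key
    _ = d := by field_simp [hd.ne']
  rwa [Real.rpow_inv_natCast_pow hP hd.ne'] at h2

theorem prod_sin_sq_le (d : ℕ) (hd : 2 ≤ d) (y : Fin d → ℝ)
    (hy : ∀ k, y k ∈ Set.Ico (0 : ℝ) π) :
    ∏ p ∈ Finset.univ.filter (fun p : Fin d × Fin d => p.1 < p.2),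
        Real.sin (y p.1 - y p.2) ^ 2 ≤ (2 : ℝ) ^ (-(d * (d - 1) : ℤ)) * d ^ d := by
  have hd0 : 0 < d := by omega
  set z : Fin d → ℂ := fun j => Complex.exp ((2 * y j : ℝ) * Complex.I) with hz
  set V : Matrix (Fin d) (Fin d) ℂ := Matrix.vandermonde z with hV
  set G : Matrix (Fin d) (Fin d) ℂ := V * V.conjTranspose with hG
  have hpsd : G.PosSemidef := Matrix.posSemidef_self_mul_conjTranspose V
  have hherm : G.IsHermitian := hpsd.1
  set lam : Fin d → ℝ := hherm.eigenvalues with hlam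
  -- the entries of V have normSq 1
  have hz1 : ∀ i j : Fin d, Complex.normSq (V i j) = 1 := by
    intro i j
    simp only [hV, Matrix.vandermonde, Matrix.of_apply, map_pow]
    rw [hz]
    simp only [Complex.normSq_eq_norm_sq, show (2:ℂ) * ↑(y i) = ↑(2 * y i) by push_cast; ring,
      Complex.norm_exp_ofReal_mul_I]
    norm_num
  -- trace of G
  have htr : G.trace = ((d : ℂ))^2 := by
    have he : ∀ i j : Fin d, V i j * (starRingEnd ℂ) (V i j) = 1 := by
      intro i j
      rw [Complex.mul_conj, hz1]
      norm_num
    simp [hG, Matrix.trace, Matrix.mul_apply, Matrix.conjTranspose_apply, he, sq]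
  -- sum of eigenvalues
  have hsum : ∑ i, lam i = (d : ℝ)^2 := by
    have := trace_eq_sum_eig hherm
    rw [htr] at this
    have : ((d:ℝ)^2 : ℂ) = ((∑ i, lam i : ℝ) : ℂ) := by push_cast [this]; ring
    exact_mod_cast this.symm
  -- product of eigenvalues
  have hdet : (Complex.normSq V.det : ℂ) = ((∏ i, lam i : ℝ) : ℂ) := by
    have h1 : G.det = (Complex.normSq V.det : ℂ) := by
      rw [hG, Matrix.det_mul, Matrix.det_conjTranspose]
      exact Complex.mul_conj _
    have h2 := hherm.det_eq_prod_eigenvalues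
    rw [h1] at h2
    rw [h2]; push_cast; rfl
  have hprodlam : ∏ i, lam i = Complex.normSq V.det := by
    exact_mod_cast hdet.symm
  -- normSq of det V as a product
  have hdet2 : Complex.normSq V.det
      = ∏ i, ∏ j ∈ Finset.Ioi i, (4 * Real.sin (y j - y i) ^ 2) := by
    rw [hV, Matrix.det_vandermonde, map_prod]
    refine Finset.prod_congr rfl fun i _ => ?_
    rw [map_prod]
    refine Finset.prod_congr rfl fun j _ => ?_
    exact normSq_exp_sub (y j) (y i)
  -- AM-GM bound
  have hbound : Complex.normSq V.det ≤ (d : ℝ)^d := by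
    rw [← hprodlam]
    exact amgm hd0 lam (fun i => hpsd.eigenvalues_nonneg i) hsum
  -- rewrite LHS
  rw [prod_pairs (fun i j => Real.sin (y i - y j) ^ 2)]
  set L : ℝ := ∏ i, ∏ j ∈ Finset.Ioi i, Real.sin (y i - y j) ^ 2 with hL
  have hLsymm : ∏ i, ∏ j ∈ Finset.Ioi i, Real.sin (y j - y i) ^ 2 = L := by
    rw [hL]
    refine Finset.prod_congr rfl fun i _ => Finset.prod_congr rfl fun j _ => ?_
    rw [show y i - y j = -(y j - y i) by ring, Real.sin_neg]
    ring
  -- the power of 4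
  have hfour : ∏ i : Fin d, ∏ _j ∈ Finset.Ioi i, (4:ℝ) = 2 ^ (d * (d-1)) := by
    simp only [Finset.prod_const]
    rw [Finset.prod_pow_eq_pow_sum]
    have hK : (∑ i : Fin d, (Finset.Ioi i).card) * 2 = d * (d - 1) := by
      have h1 : ∀ i : Fin d, (Finset.Ioi i).card = d - 1 - (i : ℕ) := fun i => Fin.card_Ioi i
      simp only [h1]
      rw [Fin.sum_univ_eq_sum_range (fun i => d - 1 - i) d]
      rw [show (∑ i ∈ Finset.range d, (d - 1 - i)) = ∑ i ∈ Finset.range d, i from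
        Finset.sum_range_reflect (fun i => i) d]
      exact Finset.sum_range_id_mul_two d
    rw [show (4:ℝ) = 2^2 by norm_num, ← pow_mul, ← hK]
    ring_nf
  have hfactor : Complex.normSq V.det = 2 ^ (d * (d-1)) * L := by
    rw [hdet2]
    rw [← hfour, ← hLsymm, ← Finset.prod_mul_distrib]
    refine Finset.prod_congr rfl fun i _ => ?_
    rw [← Finset.prod_mul_distrib]
  -- finish
  have hpow : ((2:ℝ)) ^ (-(d * (d - 1) : ℤ)) = ((2:ℝ) ^ (d * (d-1) : ℕ))⁻¹ := by
    rw [zpow_neg]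
    congr 1
    rw [show ((d:ℤ) * ((d:ℤ) - 1)) = ((d * (d-1) : ℕ) : ℤ) by
      push_cast [Nat.cast_sub (by omega : 1 ≤ d)]; ring]
    exact zpow_natCast 2 _
  rw [hpow]
  have h2pos : (0:ℝ) < 2 ^ (d * (d-1)) := by positivity
  rw [inv_mul_eq_div, le_div_iff₀ h2pos]
  calc L * 2 ^ (d * (d-1)) = Complex.normSq V.det := by rw [hfactor]; ring
  _ ≤ (d:ℝ)^d := hbound
end

section
/- For points z₁, …, z_d on the unit circle in ℂ with d ≥ 2, the product ∏_{1≤j<k≤d} |z_j − z_k|² is at most d^d, with equality if and only if the z_k are (up to rotation) the d-th roots of unity. -/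
open Complex Finset Matrix
open scoped ComplexOrder

private lemma amgm_aux (d : ℕ) (hd : 0 < d) (lam : Fin d → ℝ) (h0 : ∀ i, 0 ≤ lam i)
    (hsum : ∑ i, lam i = (d : ℝ) * d) :
    (∏ i, lam i ≤ (d : ℝ) ^ d) ∧ ((∏ i, lam i = (d : ℝ) ^ d) → ∀ i, lam i = d) := by
  have hdR : (0:ℝ) < d := Nat.cast_pos.mpr hd
  by_cases hpos : ∀ i, 0 < lam i
  · set w : Fin d → ℝ := fun _ => (d:ℝ)⁻¹ with hw
    have hw1 : ∑ i : Fin d, w i = 1 := by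
      simp only [hw, Finset.sum_const, card_univ, Fintype.card_fin, nsmul_eq_mul]
      field_simp
    have hmem : ∀ i ∈ Finset.univ, lam i ∈ Set.Ioi (0:ℝ) := fun i _ => hpos i
    have hwpos : ∀ i ∈ (Finset.univ : Finset (Fin d)), 0 < w i := fun i _ => by
      simp only [hw]; positivity
    have hcenter : ∑ i : Fin d, w i • lam i = (d:ℝ) := by
      simp only [hw, smul_eq_mul]
      rw [← Finset.mul_sum, hsum]
      field_simp
    have hjen : ∑ i : Fin d, w i • Real.log (lam i) ≤ Real.log d := by
      have := strictConcaveOn_log_Ioi.concaveOn.le_map_sum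
        (fun i _ => le_of_lt (hwpos i (mem_univ i))) hw1 hmem
      rwa [hcenter] at this
    have hscale : ∑ i : Fin d, w i • Real.log (lam i)
        = (d:ℝ)⁻¹ * ∑ i, Real.log (lam i) := by
      simp only [hw, smul_eq_mul]
      rw [Finset.mul_sum]
    have hlogsum : ∑ i, Real.log (lam i) ≤ (d:ℝ) * Real.log d := by
      have h2 : (d:ℝ)⁻¹ * ∑ i, Real.log (lam i) ≤ Real.log d := hscale ▸ hjen
      calc ∑ i, Real.log (lam i) = (d:ℝ) * ((d:ℝ)⁻¹ * ∑ i, Real.log (lam i)) := by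
            field_simp
        _ ≤ (d:ℝ) * Real.log d := by
            exact mul_le_mul_of_nonneg_left h2 hdR.le
    have hexp : ∏ i, lam i = Real.exp (∑ i, Real.log (lam i)) := by
      rw [Real.exp_sum]
      exact Finset.prod_congr rfl fun i _ => (Real.exp_log (hpos i)).symm
    have hdd : Real.exp ((d:ℝ) * Real.log d) = (d:ℝ)^d := by
      rw [Real.exp_nat_mul, Real.exp_log hdR]
    constructor
    · rw [hexp, ← hdd]; exact Real.exp_le_exp.mpr hlogsum
    · intro heq
      have hls : ∑ i, Real.log (lam i) = (d:ℝ) * Real.log d := by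
        have h3 : Real.exp (∑ i, Real.log (lam i)) = Real.exp ((d:ℝ) * Real.log d) := by
          rw [← hexp, hdd, heq]
        exact Real.exp_injective h3
      have hjeq : Real.log (∑ i : Fin d, w i • lam i)
          ≤ ∑ i : Fin d, w i • Real.log (lam i) := by
        rw [hcenter, hscale, hls]
        field_simp
        exact le_rfl
      have hall := strictConcaveOn_log_Ioi.eq_of_map_sum_eq hwpos hw1 hmem hjeq
      intro i
      have hsum2 : ∑ j, lam j = (d:ℝ) * lam i := by
        rw [Finset.sum_congr rfl (fun j _ => hall (mem_univ j) (mem_univ i))]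
        simp [Finset.sum_const, card_univ, mul_comm]
      have : (d:ℝ) * lam i = (d:ℝ) * d := by rw [← hsum2, hsum]
      exact mul_left_cancel₀ hdR.ne' this
  · push_neg at hpos
    obtain ⟨i, hi⟩ := hpos
    have hzero : lam i = 0 := le_antisymm hi (h0 i)
    have hprod : ∏ j, lam j = 0 := Finset.prod_eq_zero (mem_univ i) hzero
    constructor
    · rw [hprod]; positivity
    · intro heq
      exfalso
      rw [hprod] at heq
      have : (0:ℝ) < (d:ℝ)^d := by positivity
      rw [← heq] at this
      exact lt_irrefl _ this

private lemma geom_zero_of (d : ℕ) {u : ℂ} (hu : u ≠ 1) (hud : u ^ d = 1) :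
    ∑ k ∈ Finset.range d, u ^ k = 0 := by
  have h := geom_sum_mul u d
  rw [hud, sub_self] at h
  rcases mul_eq_zero.mp h with h' | h'
  · exact h'
  · exact absurd (sub_eq_zero.mp h') hu

theorem vandermonde_unit_circle (d : ℕ) (hd : 2 ≤ d) (z : Fin d → ℂ)
    (hz : ∀ k, ‖z k‖ = 1) :
    (∏ p ∈ Finset.univ.filter (fun p : Fin d × Fin d => p.1 < p.2),
        ‖z p.1 - z p.2‖ ^ 2 ≤ (d : ℝ) ^ d) ∧
      ((∏ p ∈ Finset.univ.filter (fun p : Fin d × Fin d => p.1 < p.2),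
          ‖z p.1 - z p.2‖ ^ 2 = (d : ℝ) ^ d) ↔
        ∃ w : ℂ, ‖w‖ = 1 ∧ ∃ σ : Equiv.Perm (Fin d), ∀ k : Fin d,
          z (σ k) = w * Complex.exp (2 * Real.pi * Complex.I * k / d)) := by
  have hd0 : 0 < d := by omega
  haveI : NeZero d := ⟨hd0.ne'⟩
  have hdC : ((d:ℂ)) ≠ 0 := Nat.cast_ne_zero.mpr hd0.ne'
  -- unit circle facts
  have hz1 : ∀ i, z i * (starRingEnd ℂ) (z i) = 1 := by
    intro i
    rw [Complex.mul_conj]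
    rw [Complex.normSq_eq_norm_sq, hz i]
    norm_num
  set V : Matrix (Fin d) (Fin d) ℂ := Matrix.vandermonde z with hV
  set G : Matrix (Fin d) (Fin d) ℂ := V * Vᴴ with hGdef
  have hG : G.PosSemidef := Matrix.posSemidef_self_mul_conjTranspose V
  have hH : G.IsHermitian := hG.1
  have hGent : ∀ i j, G i j = ∑ k ∈ Finset.range d, (z i * (starRingEnd ℂ) (z j)) ^ k := by
    intro i j
    rw [hGdef, Matrix.mul_apply, ← Fin.sum_univ_eq_sum_range
      (fun k => (z i * (starRingEnd ℂ) (z j)) ^ k) d]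
    apply Finset.sum_congr rfl
    intro k _
    rw [Matrix.conjTranspose_apply, hV]
    simp only [Matrix.vandermonde_apply, star_pow, mul_pow]
    rfl
  set P : ℝ := ∏ p ∈ Finset.univ.filter (fun p : Fin d × Fin d => p.1 < p.2),
      ‖z p.1 - z p.2‖ ^ 2 with hPdef
  have hsplit : P = ∏ i : Fin d, ∏ j ∈ Finset.Ioi i, ‖z i - z j‖ ^ 2 := by
    rw [hPdef]
    exact Finset.prod_finset_product'
      (Finset.univ.filter fun p : Fin d × Fin d => p.1 < p.2) Finset.univ
      (fun i => Finset.Ioi i)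
      (fun p => by simp [Finset.mem_Ioi]) (f := fun i j => ‖z i - z j‖ ^ 2)
  have hPdet : P = ‖V.det‖ ^ 2 := by
    rw [hsplit, hV, Matrix.det_vandermonde, norm_prod, ← Finset.prod_pow]
    apply Finset.prod_congr rfl
    intro i _
    rw [norm_prod, ← Finset.prod_pow]
    exact Finset.prod_congr rfl fun j _ => by rw [norm_sub_rev]
  have hdetG : G.det = ((‖V.det‖ ^ 2 : ℝ) : ℂ) := by
    rw [hGdef, Matrix.det_mul, Matrix.det_conjTranspose]
    have h0 : star V.det = (starRingEnd ℂ) V.det := rfl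
    rw [h0, Complex.mul_conj]
    congr 1
    rw [Complex.normSq_eq_norm_sq]
  set lam : Fin d → ℝ := hH.eigenvalues with hlam
  have hlam0 : ∀ i, 0 ≤ lam i := hG.eigenvalues_nonneg
  have hdetlam : G.det = ∏ i, (lam i : ℂ) := hH.det_eq_prod_eigenvalues
  have htrace : G.trace = (d:ℂ) * d := by
    rw [Matrix.trace]
    have : ∀ i : Fin d, Matrix.diag G i = (d : ℂ) := by
      intro i
      rw [Matrix.diag_apply, hGent i i, Finset.sum_congr rfl
        (fun k _ => by rw [hz1 i, one_pow])]
      simp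
    rw [Finset.sum_congr rfl fun i _ => this i]
    simp [mul_comm]
  have htr2 : G.trace = ∑ i, (lam i : ℂ) := by
    nth_rewrite 1 [hH.spectral_theorem]
    rw [Unitary.conjStarAlgAut_apply, Matrix.trace_mul_comm, ← mul_assoc,
      Matrix.mem_unitaryGroup_iff'.mp (hH.eigenvectorUnitary).2, one_mul]
    rw [Matrix.trace_diagonal]
    rfl
  have hsumlam : ∑ i, lam i = (d:ℝ) * d := by
    have h4 : ((∑ i, lam i : ℝ) : ℂ) = ((d:ℝ) * d : ℝ) := by
      push_cast
      rw [← htr2, htrace]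
    exact_mod_cast h4
  obtain ⟨hle, heqc⟩ := amgm_aux d hd0 lam hlam0 hsumlam
  have hProdlam : ∏ i, lam i = ‖V.det‖ ^ 2 := by
    have h5 : ((∏ i, lam i : ℝ) : ℂ) = ((‖V.det‖ ^ 2 : ℝ) : ℂ) := by
      push_cast
      rw [← hdetlam, hdetG]
      push_cast
      ring
    exact_mod_cast h5
  have hP1 : P ≤ (d:ℝ)^d := by rw [hPdet, ← hProdlam]; exact hle
  refine ⟨hP1, ?_, ?_⟩
  · -- equality implies roots of unity
    intro heq
    have hlamd : ∀ i, lam i = d := heqc (by rw [hProdlam, ← hPdet, heq])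
    -- G = d • 1
    have hGd : G = (d:ℂ) • (1 : Matrix (Fin d) (Fin d) ℂ) := by
      have h1 : Matrix.diagonal ((RCLike.ofReal ∘ lam) : Fin d → ℂ)
          = (d:ℂ) • (1 : Matrix (Fin d) (Fin d) ℂ) := by
        ext i j
        rcases eq_or_ne i j with rfl | hne
        · simp [hlamd i]
        · simp [Matrix.diagonal_apply_ne _ hne, Matrix.one_apply_ne hne]
      calc G = (hH.eigenvectorUnitary : Matrix (Fin d) (Fin d) ℂ)
            * Matrix.diagonal (RCLike.ofReal ∘ lam)
            * (star (hH.eigenvectorUnitary : Matrix (Fin d) (Fin d) ℂ)) :=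
          hH.spectral_theorem
        _ = (d:ℂ) • ((hH.eigenvectorUnitary : Matrix (Fin d) (Fin d) ℂ)
            * (star (hH.eigenvectorUnitary : Matrix (Fin d) (Fin d) ℂ))) := by
          rw [h1]
          rw [Matrix.mul_smul, Matrix.smul_mul, Matrix.mul_one]
        _ = (d:ℂ) • (1 : Matrix (Fin d) (Fin d) ℂ) := by
          rw [Matrix.mem_unitaryGroup_iff.mp (hH.eigenvectorUnitary).2]
    have hoff : ∀ i j : Fin d, i ≠ j →
        ∑ k ∈ Finset.range d, (z i * (starRingEnd ℂ) (z j)) ^ k = 0 := by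
      intro i j hij
      rw [← hGent i j, hGd]
      simp [Matrix.one_apply_ne hij]
    have hu_ne : ∀ i j : Fin d, i ≠ j → z i * (starRingEnd ℂ) (z j) ≠ 1 := by
      intro i j hij h1
      have := hoff i j hij
      rw [Finset.sum_congr rfl (fun k _ => by rw [h1, one_pow])] at this
      simp at this
      omega
    have hu_pow : ∀ i j : Fin d, i ≠ j → (z i * (starRingEnd ℂ) (z j)) ^ d = 1 := by
      intro i j hij
      have h := geom_sum_mul (z i * (starRingEnd ℂ) (z j)) d
      rw [hoff i j hij, zero_mul] at h
      have := sub_eq_zero.mp h.symm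
      linear_combination this
    have hzinj : Function.Injective z := by
      intro i j hij
      by_contra hne
      apply hu_ne i j hne
      rw [hij, hz1 j]
    set i0 : Fin d := ⟨0, hd0⟩ with hi0
    set w : ℂ := z i0 with hwdef
    set ζ : ℂ := Complex.exp (2 * Real.pi * Complex.I / d) with hζdef
    have hζ : IsPrimitiveRoot ζ d := Complex.isPrimitiveRoot_exp d hd0.ne'
    have hroot : ∀ i : Fin d, (z i * (starRingEnd ℂ) w) ^ d = 1 := by
      intro i
      by_cases h : i = i0
      · rw [h, hwdef, hz1 i0, one_pow]
      · exact hu_pow i i0 h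
    have hex : ∀ i : Fin d, ∃ m : Fin d, z i = w * ζ ^ (m : ℕ) := by
      intro i
      obtain ⟨m, hm, hmeq⟩ := hζ.eq_pow_of_pow_eq_one (hroot i)
      refine ⟨⟨m, hm⟩, ?_⟩
      have h6 : w * (z i * (starRingEnd ℂ) w) = z i := by
        have := hz1 i0
        rw [← hwdef] at this
        linear_combination z i * this
      rw [← h6, hmeq]
    choose m hm using hex
    have hminj : Function.Injective m := by
      intro i j h
      apply hzinj
      rw [hm i, hm j, h]
    set e : Fin d ≃ Fin d := Equiv.ofBijective m (Finite.injective_iff_bijective.mp hminj)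
      with he
    refine ⟨w, hz i0, e.symm, ?_⟩
    intro k
    have h7 : m (e.symm k) = k := e.apply_symm_apply k
    rw [hm (e.symm k), h7, hζdef, ← Complex.exp_nat_mul]
    congr 1
    ring
  · -- roots of unity implies equality
    rintro ⟨w, hw, σ, hσ⟩
    have hzi : ∀ i : Fin d, z i = w * Complex.exp (2 * Real.pi * Complex.I * (σ.symm i : ℕ) / d) := by
      intro i
      have := hσ (σ.symm i)
      rwa [σ.apply_symm_apply] at this
    set ζ : ℂ := Complex.exp (2 * Real.pi * Complex.I / d) with hζdef
    have hζ : IsPrimitiveRoot ζ d := Complex.isPrimitiveRoot_exp d hd0.ne'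
    have hzi' : ∀ i : Fin d, z i = w * ζ ^ ((σ.symm i : Fin d) : ℕ) := by
      intro i
      rw [hzi i, hζdef, ← Complex.exp_nat_mul]
      congr 2
      ring
    have hw1 : w * (starRingEnd ℂ) w = 1 := by
      rw [Complex.mul_conj, Complex.normSq_eq_norm_sq, hw]
      norm_num
    have hzinj : Function.Injective z := by
      intro i j hij
      rw [hzi' i, hzi' j] at hij
      have hwne : w ≠ 0 := by
        intro h; rw [h, norm_zero] at hw; norm_num at hw
      have h8 : ζ ^ ((σ.symm i : Fin d) : ℕ) = ζ ^ ((σ.symm j : Fin d) : ℕ) :=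
        mul_left_cancel₀ hwne hij
      have h9 := hζ.pow_inj (Fin.is_lt _) (Fin.is_lt _) h8
      have : σ.symm i = σ.symm j := Fin.ext h9
      simpa using congrArg σ this
    have hGd : G = (d:ℂ) • (1 : Matrix (Fin d) (Fin d) ℂ) := by
      ext i j
      rw [hGent i j]
      by_cases hij : i = j
      · subst hij
        rw [Finset.sum_congr rfl (fun k _ => by rw [hz1 i, one_pow])]
        simp
      · have hu1 : z i * (starRingEnd ℂ) (z j) ≠ 1 := by
          intro h1
          apply hij
          apply hzinj
          have : z i * ((starRingEnd ℂ) (z j) * z j) = z j := by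
            linear_combination z j * h1
          rw [mul_comm ((starRingEnd ℂ) (z j)) (z j), hz1 j, mul_one] at this
          exact this
        have hud : (z i * (starRingEnd ℂ) (z j)) ^ d = 1 := by
          have hzd : ∀ a : Fin d, (z a) ^ d = w ^ d := by
            intro a
            rw [hzi' a, mul_pow, ← pow_mul, mul_comm ((σ.symm a : Fin d) : ℕ) d, pow_mul,
              hζ.pow_eq_one, one_pow, mul_one]
          have hcj : (starRingEnd ℂ) (z j) ^ d = (starRingEnd ℂ) (z j ^ d) :=
            (map_pow _ _ _).symm
          rw [mul_pow, hcj, hzd i, hzd j]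
          calc w ^ d * (starRingEnd ℂ) (w ^ d)
              = (w * (starRingEnd ℂ) w) ^ d := by rw [mul_pow, map_pow]
            _ = 1 := by rw [hw1, one_pow]
        rw [geom_zero_of d hu1 hud]
        simp [Matrix.one_apply_ne hij]
    have hdetGd : G.det = (d:ℂ) ^ d := by
      rw [hGd, Matrix.det_smul, Matrix.det_one, mul_one]
      simp
    have : ((‖V.det‖ ^ 2 : ℝ) : ℂ) = (((d:ℝ) ^ d : ℝ) : ℂ) := by
      rw [← hdetG, hdetGd]
      push_cast
      ring
    rw [hPdet]
    exact_mod_cast this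
end

section
/- Let a > 0, D > 0, d ≥ 2, and let f(x) = ∏_{k=1}^d (x − x_k) be a monic real polynomial of degree d with d real roots whose discriminant ∏_{1≤j<k≤d}(x_j − x_k)² equals D. Then |f(ai)| ≥ (2a)^(d/2) · d^(−d/(2d−2)) · D^(1/(2d−2)). -/
open Real Finset
open scoped ComplexOrder

lemma my_trace_eq_sum_eig {n : ℕ} (A : Matrix (Fin n) (Fin n) ℂ) (hA : A.IsHermitian) :
    A.trace = ∑ i, (hA.eigenvalues i : ℂ) := by
  exact hA.trace_eq_sum_eigenvalues

lemma my_hadamard {n : ℕ} (hn : 0 < n) (N : Matrix (Fin n) (Fin n) ℂ)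
    (h : ∀ i, ∑ j, Complex.normSq (N i j) = 1) :
    Complex.normSq N.det ≤ 1 := by
  set G := N * N.conjTranspose with hGdef
  have hG : G.PosSemidef := Matrix.posSemidef_self_mul_conjTranspose N
  have htr : G.trace = (n : ℂ) := by
    rw [Matrix.trace]
    have hd : ∀ i, G.diag i = 1 := by
      intro i
      rw [hGdef, Matrix.diag_apply, Matrix.mul_apply]
      simp only [Matrix.conjTranspose_apply, Complex.star_def, Complex.mul_conj]
      rw [← Complex.ofReal_sum, h i, Complex.ofReal_one]
    calc ∑ i, G i i = ∑ _i : Fin n, (1:ℂ) := Finset.sum_congr rfl (fun i _ => hd i)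
      _ = (n : ℂ) := by simp
  have hsum : ∑ i, hG.1.eigenvalues i = (n : ℝ) := by
    have := my_trace_eq_sum_eig G hG.1
    rw [htr] at this
    exact_mod_cast this.symm
  have hprod : Complex.normSq N.det = ∏ i, hG.1.eigenvalues i := by
    have h1 : G.det = (Complex.normSq N.det : ℂ) := by
      rw [hGdef, Matrix.det_mul, Matrix.det_conjTranspose, Complex.star_def, Complex.mul_conj]
    have h2 := hG.1.det_eq_prod_eigenvalues
    rw [h1] at h2
    rw [← RCLike.ofReal_prod] at h2
    exact RCLike.ofReal_inj.mp h2
  rw [hprod]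
  have hnn : ∀ i ∈ Finset.univ, (0:ℝ) ≤ hG.1.eigenvalues i := fun i _ => hG.eigenvalues_nonneg i
  have hw : ∀ i ∈ (Finset.univ : Finset (Fin n)), (0:ℝ) ≤ (1 : ℝ)/n := by intro i _; positivity
  have hw1 : ∑ _i : Fin n, (1:ℝ)/n = 1 := by
    rw [Finset.sum_const, Finset.card_univ, Fintype.card_fin, nsmul_eq_mul]
    field_simp
  have amgm := Real.geom_mean_le_arith_mean_weighted Finset.univ _ _ hw hw1 hnn
  have hrhs : ∑ i, (1:ℝ)/n * hG.1.eigenvalues i = 1 := by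
    rw [← Finset.mul_sum, hsum]
    field_simp
  rw [hrhs] at amgm
  calc ∏ i, hG.1.eigenvalues i
      = ∏ i, (hG.1.eigenvalues i ^ ((1:ℝ)/n)) ^ (n : ℕ) := by
        apply Finset.prod_congr rfl
        intro i _
        rw [← Real.rpow_natCast (hG.1.eigenvalues i ^ ((1:ℝ)/n)) n,
          ← Real.rpow_mul (hnn i (Finset.mem_univ i)),
          one_div_mul_cancel (by exact_mod_cast hn.ne' : (n:ℝ) ≠ 0), Real.rpow_one]
    _ = (∏ i, hG.1.eigenvalues i ^ ((1:ℝ)/n)) ^ (n:ℕ) := by rw [Finset.prod_pow]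
    _ ≤ 1 ^ (n:ℕ) := by
        apply pow_le_pow_left₀
          (Finset.prod_nonneg (fun i _ => Real.rpow_nonneg (hnn i (Finset.mem_univ i)) _)) amgm
    _ = 1 := one_pow n

lemma my_vdm_bound {n : ℕ} (hn : 0 < n) (z : Fin n → ℂ)
    (hz : ∀ i, Complex.normSq (z i) = 1) :
    Complex.normSq (Matrix.vandermonde z).det ≤ (n:ℝ) ^ n := by
  have hn' : (0:ℝ) < n := by exact_mod_cast hn
  set c : ℂ := (((Real.sqrt n)⁻¹ : ℝ) : ℂ) with hc
  have hcsq : Complex.normSq c = (n:ℝ)⁻¹ := by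
    rw [hc, Complex.normSq_ofReal, ← mul_inv, Real.mul_self_sqrt hn'.le]
  have key := my_hadamard hn (Matrix.of fun i j => c * z i ^ (j:ℕ)) ?_
  · have heq : (Matrix.of fun i j : Fin n => c * z i ^ (j:ℕ)) = c • Matrix.vandermonde z := by
      ext i j
      simp [Matrix.vandermonde, smul_eq_mul]
    rw [heq, Matrix.det_smul, Fintype.card_fin] at key
    rw [map_mul, map_pow, hcsq] at key
    have h2 : ((n:ℝ)⁻¹) ^ n * Complex.normSq (Matrix.vandermonde z).det ≤ 1 := key
    calc Complex.normSq (Matrix.vandermonde z).det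
        = (n:ℝ)^n * (((n:ℝ)⁻¹)^n * Complex.normSq (Matrix.vandermonde z).det) := by
          rw [← mul_assoc, ← mul_pow, mul_inv_cancel₀ hn'.ne', one_pow, one_mul]
      _ ≤ (n:ℝ)^n * 1 := mul_le_mul_of_nonneg_left h2 (by positivity)
      _ = (n:ℝ)^n := mul_one _
  · intro i
    simp only [Matrix.of_apply, map_mul, map_pow, hcsq, hz, one_pow, mul_one]
    rw [Finset.sum_const, Finset.card_univ, Fintype.card_fin, nsmul_eq_mul]
    field_simp

lemma my_prod_pairs {M : Type*} [CommMonoid M] {n : ℕ} (f : Fin n × Fin n → M) :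
    ∏ p ∈ Finset.univ.filter (fun p : Fin n × Fin n => p.1 < p.2), f p
      = ∏ i, ∏ j ∈ Finset.Ioi i, f (i, j) := by
  rw [Finset.prod_sigma']
  refine Finset.prod_nbij' (fun p => ⟨p.1, p.2⟩) (fun x => (x.1, x.2)) ?_ ?_ ?_ ?_ ?_ <;>
    simp [Finset.mem_sigma, Finset.mem_filter, Finset.mem_Ioi]

lemma my_pair_prod_eq {M : Type*} [CommMonoid M] {n : ℕ} (g : Fin n → M) :
    ∏ i, ∏ j ∈ Finset.Ioi i, (g i * g j) = ∏ k, g k ^ (n - 1) := by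
  rw [Finset.prod_congr rfl (fun i _ => Finset.prod_mul_distrib), Finset.prod_mul_distrib]
  have h1 : ∏ i, ∏ _j ∈ Finset.Ioi i, g i = ∏ i, g i ^ (n - 1 - (i:ℕ)) := by
    apply Finset.prod_congr rfl
    intro i _
    rw [Finset.prod_const, Fin.card_Ioi]
  have h2 : ∏ i, ∏ j ∈ Finset.Ioi i, g j = ∏ j, g j ^ (j:ℕ) := by
    rw [Finset.prod_comm' (t' := Finset.univ) (s' := fun j => Finset.Iio j)
      (by intro x y; simp [Finset.mem_Ioi, Finset.mem_Iio])]
    apply Finset.prod_congr rfl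
    intro j _
    rw [Finset.prod_const, Fin.card_Iio]
  rw [h1, h2, ← Finset.prod_mul_distrib]
  apply Finset.prod_congr rfl
  intro i _
  rw [← pow_add]
  congr 1
  have := i.isLt
  omega

theorem abs_at_ai_ge (d : ℕ) (hd : 2 ≤ d) (a D : ℝ) (ha : 0 < a) (hD : 0 < D)
    (x : Fin d → ℝ)
    (hdisc : ∏ p ∈ Finset.univ.filter (fun p : Fin d × Fin d => p.1 < p.2),
        (x p.1 - x p.2) ^ 2 = D) :
    ‖∏ k, ((a : ℂ) * Complex.I - (x k : ℂ))‖ ≥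
      (2 * a) ^ ((d : ℝ) / 2) * (d : ℝ) ^ (-(d : ℝ) / (2 * d - 2)) *
        D ^ ((1 : ℝ) / (2 * d - 2)) := by
  have hd0 : 0 < d := by omega
  have hd0' : (0:ℝ) < d := by exact_mod_cast hd0
  set y : Fin d → ℝ := fun k => a^2 + x k^2 with hy_def
  have hy : ∀ k, 0 < y k := fun k => by positivity
  set v : Fin d → ℂ := fun k => (a:ℂ) * Complex.I - (x k : ℂ) with hv_def
  set w : Fin d → ℂ := fun k => (a:ℂ) * Complex.I + (x k : ℂ) with hw_def
  have hnv : ∀ k, Complex.normSq (v k) = y k := by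
    intro k
    simp [hv_def, Complex.normSq_apply, hy_def]
    ring
  have hnw : ∀ k, Complex.normSq (w k) = y k := by
    intro k
    simp [hw_def, Complex.normSq_apply, hy_def]
    ring
  have hw0 : ∀ k, w k ≠ 0 := by
    intro k hk
    have := hnw k
    rw [hk, map_zero] at this
    exact (hy k).ne this
  set z : Fin d → ℂ := fun k => v k / w k with hz_def
  have hz1 : ∀ k, Complex.normSq (z k) = 1 := by
    intro k
    rw [hz_def]
    simp only [map_div₀, hnv, hnw]
    field_simp [(hy k).ne']
  -- pair identity
  have hpair : ∀ i j : Fin d, Complex.normSq (z j - z i) * (y i * y j)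
      = (2*a)^2 * (x i - x j)^2 := by
    intro i j
    have hzz : z j - z i = (2*(a:ℂ)*Complex.I*((x i : ℂ) - (x j : ℂ))) / (w i * w j) := by
      rw [hz_def]
      field_simp [hw0 i, hw0 j]
      simp only [hv_def, hw_def]
      ring
    have hnum : Complex.normSq (2*(a:ℂ)*Complex.I*((x i:ℂ) - (x j:ℂ)))
        = (2*a)^2 * (x i - x j)^2 := by
      simp [Complex.normSq_apply]
      ring
    have hden : Complex.normSq (w i * w j) = y i * y j := by
      rw [map_mul, hnw, hnw]
    rw [hzz, map_div₀, hnum, hden, div_mul_cancel₀ _ (by positivity : y i * y j ≠ 0)]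
  -- the T bound
  set T := Complex.normSq (Matrix.vandermonde z).det with hT_def
  have hTle : T ≤ (d:ℝ)^d := my_vdm_bound hd0 z hz1
  have hTeq : T = ∏ i, ∏ j ∈ Finset.Ioi i, Complex.normSq (z j - z i) := by
    rw [hT_def, Matrix.det_vandermonde, map_prod]
    exact Finset.prod_congr rfl (fun i _ => map_prod Complex.normSq _ _)
  -- the discriminant in Ioi form
  have hDIoi : ∏ i, ∏ j ∈ Finset.Ioi i, (x i - x j)^2 = D := by
    rw [← my_prod_pairs (fun p : Fin d × Fin d => (x p.1 - x p.2)^2)]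
    exact hdisc
  -- star inequality
  set P : ℝ := ∏ k, y k with hP_def
  have hPpos : 0 < P := Finset.prod_pos (fun k _ => hy k)
  have hstar : (2*a)^(d*(d-1)) * D ≤ (d:ℝ)^d * P^(d-1) := by
    have hkey : T * P^(d-1) = (2*a)^(d*(d-1)) * D := by
      have e1 : T * P^(d-1) = ∏ i, ∏ j ∈ Finset.Ioi i,
          (Complex.normSq (z j - z i) * (y i * y j)) := by
        rw [hTeq, hP_def, ← Finset.prod_pow, ← my_pair_prod_eq y, ← Finset.prod_mul_distrib]
        apply Finset.prod_congr rfl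
        intro i _
        rw [← Finset.prod_mul_distrib]
      have e2 : ∏ i, ∏ j ∈ Finset.Ioi i, ((2*a)^2 * (x i - x j)^2)
          = (2*a)^(d*(d-1)) * D := by
        rw [Finset.prod_congr rfl (fun i _ => Finset.prod_mul_distrib),
          Finset.prod_mul_distrib, hDIoi]
        congr 1
        calc ∏ i : Fin d, ∏ _j ∈ Finset.Ioi i, (2*a)^2
            = ∏ i : Fin d, ∏ _j ∈ Finset.Ioi i, ((2*a)*(2*a)) := by
              apply Finset.prod_congr rfl
              intro i _
              apply Finset.prod_congr rfl
              intro j _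
              ring
          _ = ∏ _k : Fin d, (2*a)^(d-1) := my_pair_prod_eq (fun _ : Fin d => (2*a))
          _ = (2*a)^(d*(d-1)) := by
              rw [Finset.prod_const, ← pow_mul, Finset.card_univ, Fintype.card_fin,
                Nat.mul_comm]
      rw [e1]
      rw [Finset.prod_congr rfl (fun i _ => Finset.prod_congr rfl (fun j _ => hpair i j))]
      exact e2
    calc (2*a)^(d*(d-1)) * D = T * P^(d-1) := hkey.symm
      _ ≤ (d:ℝ)^d * P^(d-1) := by
          apply mul_le_mul_of_nonneg_right hTle (by positivity)
  -- final computation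
  have hnorm : ‖∏ k, v k‖ = Real.sqrt P := by
    rw [norm_prod]
    have hvk : ∀ k, ‖v k‖ = Real.sqrt (y k) := fun k => by
      rw [Complex.norm_def, hnv k]
    rw [Finset.prod_congr rfl (fun k _ => hvk k)]
    have hsq : (∏ k, Real.sqrt (y k))^2 = P := by
      rw [← Finset.prod_pow]
      exact Finset.prod_congr rfl (fun k _ => Real.sq_sqrt (hy k).le)
    rw [← hsq, Real.sqrt_sq (Finset.prod_nonneg fun k _ => Real.sqrt_nonneg _)]
  set e : ℝ := 2*(d:ℝ) - 2 with he_def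
  have hd2 : (2:ℝ) ≤ (d:ℝ) := by exact_mod_cast hd
  have he : 0 < e := by rw [he_def]; linarith
  have he' : e ≠ 0 := he.ne'
  have h2a : (0:ℝ) < 2*a := by linarith
  have hR : D ≤ (d:ℝ)^d * P^(d-1) / (2*a)^(d*(d-1)) := by
    rw [le_div_iff₀ (by positivity)]
    calc D * (2*a)^(d*(d-1)) = (2*a)^(d*(d-1)) * D := mul_comm _ _
      _ ≤ (d:ℝ)^d * P^(d-1) := hstar
  have hDe : D ^ ((1:ℝ)/e) ≤ ((d:ℝ)^d * P^(d-1) / (2*a)^(d*(d-1))) ^ ((1:ℝ)/e) :=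
    Real.rpow_le_rpow hD.le hR (by positivity)
  have hsplit : ((d:ℝ)^d * P^(d-1) / (2*a)^(d*(d-1))) ^ ((1:ℝ)/e)
      = (d:ℝ)^((d:ℝ)/e) * P^((1:ℝ)/2) / (2*a)^((d:ℝ)/2) := by
    rw [Real.div_rpow (by positivity) (by positivity),
      Real.mul_rpow (by positivity) (by positivity)]
    have f1 : ((d:ℝ)^(d:ℕ)) ^ ((1:ℝ)/e) = (d:ℝ)^((d:ℝ)/e) := by
      rw [← Real.rpow_natCast (d:ℝ) d, ← Real.rpow_mul hd0'.le]
      congr 1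
      ring
    have f2 : (P^(d-1:ℕ)) ^ ((1:ℝ)/e) = P^((1:ℝ)/2) := by
      rw [← Real.rpow_natCast P (d-1), ← Real.rpow_mul hPpos.le]
      congr 1
      have : ((d-1:ℕ):ℝ) = (d:ℝ) - 1 := by
        push_cast [Nat.cast_sub (by omega : 1 ≤ d)]
        ring
      rw [this, he_def]
      field_simp
      exact div_self (by linarith)
    have f3 : ((2*a)^(d*(d-1):ℕ)) ^ ((1:ℝ)/e) = (2*a)^((d:ℝ)/2) := by
      rw [← Real.rpow_natCast (2*a) (d*(d-1)), ← Real.rpow_mul h2a.le]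
      congr 1
      have : ((d*(d-1):ℕ):ℝ) = (d:ℝ) * ((d:ℝ) - 1) := by
        push_cast [Nat.cast_sub (by omega : 1 ≤ d)]
        ring
      rw [this, he_def]
      field_simp
      exact div_self (by linarith)
    rw [f1, f2, f3]
  rw [hsplit] at hDe
  rw [ge_iff_le]
  calc (2 * a) ^ ((d : ℝ) / 2) * (d : ℝ) ^ (-(d : ℝ) / e) * D ^ ((1 : ℝ) / e)
      ≤ (2 * a) ^ ((d : ℝ) / 2) * (d : ℝ) ^ (-(d : ℝ) / e) *
        ((d:ℝ)^((d:ℝ)/e) * P^((1:ℝ)/2) / (2*a)^((d:ℝ)/2)) := by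
        apply mul_le_mul_of_nonneg_left hDe (by positivity)
    _ = ((2*a)^((d:ℝ)/2) / (2*a)^((d:ℝ)/2)) *
        (((d:ℝ)^(-(d:ℝ)/e) * (d:ℝ)^((d:ℝ)/e)) * P^((1:ℝ)/2)) := by
        ring
    _ = P^((1:ℝ)/2) := by
        rw [div_self (by positivity : ((2*a):ℝ)^((d:ℝ)/2) ≠ 0),
          ← Real.rpow_add hd0', one_mul]
        have hz0 : -(d:ℝ)/e + (d:ℝ)/e = 0 := by ring
        rw [hz0, Real.rpow_zero, one_mul]
    _ = Real.sqrt P := (Real.sqrt_eq_rpow P).symm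
    _ = ‖∏ k, v k‖ := hnorm.symm
end

section
/- Let a > 0, d ≥ 2, and let f be a monic real polynomial of degree d with d real roots x₁,…,x_d. If |f(ai)| = m, then the discriminant Δ_f = ∏_{1≤j<k≤d}(x_j − x_k)² satisfies Δ_f ≤ m^(2d−2) · d^d / (2a)^(d(d−1)). -/
open Real Finset

lemma prod_pairs_eq {d : ℕ} {M : Type*} [CommMonoid M] (f : Fin d → Fin d → M) :
    ∏ p ∈ Finset.univ.filter (fun p : Fin d × Fin d => p.1 < p.2), f p.1 p.2
      = ∏ i, ∏ j ∈ Finset.Ioi i, f i j := by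
  rw [Finset.prod_filter, ← Finset.univ_product_univ, Finset.prod_product]
  refine Finset.prod_congr rfl fun i _ => ?_
  rw [← Finset.filter_lt_eq_Ioi, Finset.prod_filter]

lemma prod_pairs_pow {d : ℕ} {M : Type*} [CommMonoid M] (g : Fin d → M) :
    ∏ i : Fin d, ∏ j ∈ Finset.Ioi i, (g i * g j) = ∏ k, g k ^ (d - 1) := by
  have h1 : ∏ i : Fin d, ∏ j ∈ Finset.Ioi i, g i = ∏ k : Fin d, g k ^ (d - 1 - (k : ℕ)) := by
    refine Finset.prod_congr rfl fun i _ => ?_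
    rw [Finset.prod_const, Fin.card_Ioi]
  have h2 : ∏ i : Fin d, ∏ j ∈ Finset.Ioi i, g j = ∏ k : Fin d, g k ^ (k : ℕ) := by
    rw [Finset.prod_comm' (t' := Finset.univ) (s' := fun j => Finset.Iio j) (by simp)]
    refine Finset.prod_congr rfl fun j _ => ?_
    rw [Finset.prod_const, Fin.card_Iio]
  calc ∏ i : Fin d, ∏ j ∈ Finset.Ioi i, (g i * g j)
      = (∏ i : Fin d, ∏ j ∈ Finset.Ioi i, g i) * (∏ i : Fin d, ∏ j ∈ Finset.Ioi i, g j) := by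
        rw [← Finset.prod_mul_distrib]
        exact Finset.prod_congr rfl fun i _ => Finset.prod_mul_distrib
    _ = ∏ k : Fin d, g k ^ (d - 1) := by
        rw [h1, h2, ← Finset.prod_mul_distrib]
        refine Finset.prod_congr rfl fun k _ => ?_
        rw [← pow_add]
        congr 1
        have := k.isLt
        omega


lemma vandermonde_unit_bound {d : ℕ} (hd : 0 < d) (w : Fin d → ℂ)
    (hw : ∀ k, Complex.normSq (w k) = 1) :
    ∏ i : Fin d, ∏ j ∈ Finset.Ioi i, Complex.normSq (w j - w i) ≤ (d : ℝ) ^ d := by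
  set A := Matrix.vandermonde w with hA
  have hdetA : Complex.normSq A.det = ∏ i : Fin d, ∏ j ∈ Finset.Ioi i, Complex.normSq (w j - w i) := by
    rw [hA, Matrix.det_vandermonde, map_prod]
    exact Finset.prod_congr rfl fun i _ => map_prod _ _ _
  set G := A.conjTranspose * A with hG
  have hherm : G.IsHermitian := Matrix.isHermitian_conjTranspose_mul_self A
  set μ := hherm.eigenvalues with hμ
  have hμ0 : ∀ i, 0 ≤ μ i := fun i => Matrix.eigenvalues_conjTranspose_mul_self_nonneg A i
  -- det G = normSq (det A)
  have hdetG : G.det = (Complex.normSq A.det : ℂ) := by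
    rw [hG, Matrix.det_mul, Matrix.det_conjTranspose, ← Complex.mul_conj, Complex.star_def,
      mul_comm]
  have hprod : ∏ i, μ i = Complex.normSq A.det := by
    have h := hherm.det_eq_prod_eigenvalues
    rw [hdetG] at h
    have h2 : ((∏ i, μ i : ℝ) : ℂ) = ((Complex.normSq A.det : ℝ) : ℂ) := by
      push_cast
      exact h.symm
    exact_mod_cast h2
  -- trace
  have htraceG : G.trace = (d : ℂ) * d := by
    rw [Matrix.trace]
    have : ∀ j, G.diag j = (d : ℂ) := by
      intro j
      simp only [Matrix.diag_apply, hG, Matrix.mul_apply, Matrix.conjTranspose_apply]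
      have : ∀ k, (starRingEnd ℂ) (A k j) * A k j = (1 : ℂ) := by
        intro k
        rw [mul_comm, Complex.mul_conj]
        have : Complex.normSq (A k j) = 1 := by
          rw [hA, Matrix.vandermonde_apply, map_pow, hw, one_pow]
        rw [this, Complex.ofReal_one]
      simp [this]
    rw [Finset.sum_congr rfl fun j _ => this j, Finset.sum_const]
    simp [mul_comm]
  have htrace : ∑ i, μ i = (d : ℝ) * d := by
    have h2 : G.trace = ∑ i, (μ i : ℂ) := by
      exact hherm.trace_eq_sum_eigenvalues
    rw [htraceG] at h2
    exact_mod_cast h2.symm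
  -- AM-GM
  have hgm := Real.geom_mean_le_arith_mean_weighted Finset.univ (fun _ => 1 / (d:ℝ)) μ
    (fun i _ => by positivity) (by simp [Finset.card_univ]; field_simp)
    (fun i _ => hμ0 i)
  have hsum : ∑ i, (1 / (d:ℝ)) * μ i = d := by
    rw [← Finset.mul_sum, htrace]
    field_simp
  rw [hsum] at hgm
  have hfin : ∏ i, μ i ≤ (d : ℝ) ^ d := by
    have h1 : (∏ i, μ i ^ (1 / (d:ℝ))) ^ (d:ℕ) ≤ (d:ℝ) ^ (d:ℕ) :=
      pow_le_pow_left₀ (Finset.prod_nonneg fun i _ => Real.rpow_nonneg (hμ0 i) _) hgm d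
    calc ∏ i, μ i = (∏ i, μ i ^ (1 / (d:ℝ))) ^ (d:ℕ) := by
          rw [← Finset.prod_pow]
          refine (Finset.prod_congr rfl fun i _ => ?_).symm
          rw [← Real.rpow_natCast (μ i ^ (1/(d:ℝ))), ← Real.rpow_mul (hμ0 i)]
          rw [one_div_mul_cancel (by exact_mod_cast hd.ne' : (d:ℝ) ≠ 0), Real.rpow_one]
      _ ≤ (d:ℝ) ^ d := h1
  rw [← hdetA, ← hprod]
  exact hfin

theorem disc_le (d : ℕ) (hd : 2 ≤ d) (a m : ℝ) (ha : 0 < a) (x : Fin d → ℝ)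
    (hm : ‖∏ k, ((a : ℂ) * Complex.I - (x k : ℂ))‖ = m) :
    ∏ p ∈ Finset.univ.filter (fun p : Fin d × Fin d => p.1 < p.2), (x p.1 - x p.2) ^ 2 ≤
      m ^ (2 * d - 2) * d ^ d / (2 * a) ^ (d * (d - 1)) := by
  have hN : ∀ k, (0:ℝ) < a^2 + x k^2 := fun k => by positivity
  set N : Fin d → ℝ := fun k => a^2 + x k^2 with hNdef
  -- the unit circle points
  set w : Fin d → ℂ := fun k => ⟨(x k^2 - a^2)/(N k), (-(2*a*x k))/(N k)⟩ with hwdef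
  have hw1 : ∀ k, Complex.normSq (w k) = 1 := by
    intro k
    rw [hwdef]
    simp only [Complex.normSq_mk]
    have hk : N k ≠ 0 := (hN k).ne'
    field_simp
    simp only [hNdef]
    ring
  -- key pairwise identity
  have e1 : ∀ i j, Complex.normSq (w j - w i) * (N i * N j) = ((2*a)*(2*a)) * (x i - x j)^2 := by
    intro i j
    rw [hwdef]
    simp only [Complex.normSq_apply, Complex.sub_re, Complex.sub_im, hNdef]
    have h1 := (hN i).ne'
    have h2 := (hN j).ne'
    field_simp
    ring
  -- m^2 = ∏ N
  have hm0 : 0 ≤ m := hm ▸ norm_nonneg _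
  have hm2 : m^2 = ∏ k, N k := by
    rw [← hm, norm_prod]
    rw [← Finset.prod_pow]
    refine Finset.prod_congr rfl fun k _ => ?_
    rw [Complex.sq_norm]
    simp only [Complex.normSq_apply, Complex.sub_re, Complex.sub_im, Complex.mul_re,
      Complex.mul_im, Complex.I_re, Complex.I_im, Complex.ofReal_re, Complex.ofReal_im, hNdef]
    ring
  -- Hadamard bound
  have hQ : ∏ i : Fin d, ∏ j ∈ Finset.Ioi i, Complex.normSq (w j - w i) ≤ (d:ℝ)^d :=
    vandermonde_unit_bound (by omega) w hw1
  set Q := ∏ i : Fin d, ∏ j ∈ Finset.Ioi i, Complex.normSq (w j - w i) with hQdef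
  set T := ∏ p ∈ Finset.univ.filter (fun p : Fin d × Fin d => p.1 < p.2), (x p.1 - x p.2) ^ 2 with hT
  have hfact : (2*a)^(d*(d-1)) * T = Q * m^(2*d-2) := by
    have c1 : Q * ∏ k, N k ^ (d-1) = ∏ i : Fin d, ∏ j ∈ Finset.Ioi i,
        (Complex.normSq (w j - w i) * (N i * N j)) := by
      rw [← prod_pairs_pow N, hQdef, ← Finset.prod_mul_distrib]
      exact Finset.prod_congr rfl fun i _ => Finset.prod_mul_distrib.symm
    have c2 : ∏ i : Fin d, ∏ j ∈ Finset.Ioi i,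
        (((2*a)*(2*a)) * (x i - x j)^2) = (2*a)^(d*(d-1)) * T := by
      have hc : ∏ i : Fin d, ∏ j ∈ Finset.Ioi i, ((2*a)*(2*a)) = (2*a)^(d*(d-1)) := by
        rw [prod_pairs_pow (fun _ => (2*a)), Finset.prod_const, Finset.card_univ,
          Fintype.card_fin, ← pow_mul, Nat.mul_comm]
      calc ∏ i : Fin d, ∏ j ∈ Finset.Ioi i, (((2*a)*(2*a)) * (x i - x j)^2)
          = (∏ i : Fin d, ∏ j ∈ Finset.Ioi i, ((2*a)*(2*a)))
            * ∏ i : Fin d, ∏ j ∈ Finset.Ioi i, (x i - x j)^2 := by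
            rw [← Finset.prod_mul_distrib]
            exact Finset.prod_congr rfl fun i _ => Finset.prod_mul_distrib
        _ = (2*a)^(d*(d-1)) * T := by
            rw [hc, hT, prod_pairs_eq fun i j => (x i - x j)^2]
    have c3 : ∏ k, N k ^ (d-1) = m^(2*d-2) := by
      rw [Finset.prod_pow, ← hm2, ← pow_mul]
      congr 1
      omega
    rw [← c3, c1, ← c2]
    exact Finset.prod_congr rfl fun i _ => Finset.prod_congr rfl fun j _ => (e1 i j).symm
  -- final
  have hpow : (0:ℝ) < (2*a)^(d*(d-1)) := by positivity
  rw [le_div_iff₀ hpow]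
  calc T * (2*a)^(d*(d-1)) = Q * m^(2*d-2) := by rw [← hfact]; ring
    _ ≤ (d:ℝ)^d * m^(2*d-2) := by
        apply mul_le_mul_of_nonneg_right hQ (by positivity)
    _ = m ^ (2*d-2) * (d:ℝ)^d := by ring
  -- note: goal has ↑d ^ d
end

section
/- For d ≥ 2 and a > 0, the roots of the polynomial F(x) = ((x + ai)^d + (x − ai)^d)/2 are exactly the d real numbers a·tan(π/(2d) + kπ/d) for k = 0, 1, …, d−1 when d is even, and a·tan(kπ/d) for k = 0, 1, …, d−1 when d is odd; in particular all roots of F are real and distinct. -/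
open Real Finset

/-- The offset angle. -/
noncomputable def Foff (d : ℕ) : ℝ := if Even d then π / (2 * d) else 0

lemma Fcos_ne (d k : ℕ) (hd : 1 ≤ d) : Real.cos (Foff d + k * π / d) ≠ 0 := by
  intro h
  rw [Real.cos_eq_zero_iff] at h
  obtain ⟨n, hn⟩ := h
  have hπ : (0:ℝ) < π := Real.pi_pos
  have hd' : (d:ℝ) ≠ 0 := by positivity
  rcases Nat.even_or_odd d with he | ho
  · rw [Foff, if_pos he] at hn
    -- π/(2d) + kπ/d = (2n+1) π/2  ⇒  1 + 2k = (2n+1) d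
    have key : (1 : ℝ) + 2 * k = (2 * n + 1) * d := by
      field_simp at hn
      have h2 : ((1 : ℝ) + 2 * k) * (2 * π * d) = ((2 * n + 1) * d) * (2 * π * d) := by
        linear_combination (2 * π * d) * hn
      exact mul_right_cancel₀ (by positivity) h2
    have keyz : (1 : ℤ) + 2 * k = (2 * n + 1) * d := by exact_mod_cast key
    obtain ⟨m, hm⟩ := he
    have : (1 : ℤ) + 2 * k = 2 * ((2 * n + 1) * m) := by
      rw [keyz]; push_cast [hm]; ring
    omega
  · rw [Foff, if_neg (Nat.not_even_iff_odd.mpr ho)] at hn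
    -- 0 + kπ/d = (2n+1) π/2  ⇒  2k = (2n+1) d
    have key : (2 : ℝ) * k = (2 * n + 1) * d := by
      field_simp at hn
      have h2 : ((2 : ℝ) * k) * (π * d) = ((2 * n + 1) * d) * (π * d) := by
        linear_combination (d : ℝ) * hn
      exact mul_right_cancel₀ (by positivity) h2
    have keyz : (2 : ℤ) * k = (2 * n + 1) * d := by exact_mod_cast key
    obtain ⟨m, hm⟩ := ho
    have : (2 : ℤ) * k = 2 * (2 * n * m + n + m) + 1 := by
      rw [keyz]; push_cast [hm]; ring
    omega

lemma Ftrig_even (d k : ℕ) (hd : 1 ≤ d) (he : Even d) :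
    Real.cos (d * (Foff d + k * π / d)) = 0 := by
  have hd' : (d:ℝ) ≠ 0 := by positivity
  rw [Real.cos_eq_zero_iff]
  exact ⟨k, by rw [Foff, if_pos he]; field_simp; push_cast; ring⟩

lemma Ftrig_odd (d k : ℕ) (hd : 1 ≤ d) (ho : ¬ Even d) :
    Real.sin (d * (Foff d + k * π / d)) = 0 := by
  have hd' : (d:ℝ) ≠ 0 := by positivity
  have : (d : ℝ) * (Foff d + k * π / d) = k * π := by
    rw [Foff, if_neg ho]; field_simp; ring
  rw [this]
  exact Real.sin_nat_mul_pi k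

/-- Key factorization of the two linear factors at `x = a tan θ`. -/
lemma Ffactor_plus (a θ : ℝ) (hc : Real.cos θ ≠ 0) :
    ((a * Real.tan θ : ℝ) : ℂ) + a * Complex.I
      = ((a / Real.cos θ : ℝ) : ℂ) * Complex.I * Complex.exp ((-θ : ℂ) * Complex.I) := by
  rw [Complex.exp_mul_I, Complex.cos_neg, Complex.sin_neg,
    ← Complex.ofReal_cos, ← Complex.ofReal_sin]
  have hc' : Complex.cos (θ : ℂ) ≠ 0 := by
    rw [← Complex.ofReal_cos]; exact_mod_cast hc
  rw [Real.tan_eq_sin_div_cos]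
  push_cast
  field_simp
  linear_combination (a : ℂ) * Complex.sin (θ : ℂ) * Complex.I_sq

lemma Ffactor_minus (a θ : ℝ) (hc : Real.cos θ ≠ 0) :
    ((a * Real.tan θ : ℝ) : ℂ) - a * Complex.I
      = -(((a / Real.cos θ : ℝ) : ℂ) * Complex.I) * Complex.exp ((θ : ℂ) * Complex.I) := by
  rw [Complex.exp_mul_I]
  have hc' : Complex.cos (θ : ℂ) ≠ 0 := by
    rw [← Complex.ofReal_cos]; exact_mod_cast hc
  rw [Real.tan_eq_sin_div_cos]
  push_cast
  field_simp
  linear_combination (a : ℂ) * Complex.sin (θ : ℂ) * Complex.I_sq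

/-- Value of `(x+ai)^d + (x-ai)^d` at `x = a tan θ`. -/
lemma Fvalue (a θ : ℝ) (hc : Real.cos θ ≠ 0) (d : ℕ) :
    (((a * Real.tan θ : ℝ) : ℂ) + a * Complex.I) ^ d
      + (((a * Real.tan θ : ℝ) : ℂ) - a * Complex.I) ^ d
    = (((a / Real.cos θ : ℝ) : ℂ) * Complex.I) ^ d *
        (Complex.exp (((-(d * θ) : ℝ) : ℂ) * Complex.I)
          + (-1) ^ d * Complex.exp (((d * θ : ℝ) : ℂ) * Complex.I)) := by
  rw [Ffactor_plus a θ hc, Ffactor_minus a θ hc,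
    show (((-(d * θ) : ℝ) : ℂ)) * Complex.I = (d : ℕ) * ((-θ : ℂ) * Complex.I) by
      push_cast; ring,
    show (((d * θ : ℝ)) : ℂ) * Complex.I = (d : ℕ) * ((θ : ℂ) * Complex.I) by
      push_cast; ring,
    Complex.exp_nat_mul, Complex.exp_nat_mul]
  ring

lemma Froot (d k : ℕ) (hd : 1 ≤ d) (a : ℝ) :
    (((a * Real.tan (Foff d + k * π / d) : ℝ) : ℂ) + a * Complex.I) ^ d
      + (((a * Real.tan (Foff d + k * π / d) : ℝ) : ℂ) - a * Complex.I) ^ d = 0 := by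
  set θ := Foff d + k * π / d with hθ
  have hc := Fcos_ne d k hd
  rw [Fvalue a θ hc d]
  have key : Complex.exp (((-(d * θ) : ℝ) : ℂ) * Complex.I)
      + (-1 : ℂ) ^ d * Complex.exp (((d * θ : ℝ) : ℂ) * Complex.I) = 0 := by
    rw [Complex.exp_mul_I, Complex.exp_mul_I,
      ← Complex.ofReal_cos, ← Complex.ofReal_sin, ← Complex.ofReal_cos, ← Complex.ofReal_sin,
      Real.cos_neg, Real.sin_neg]
    rcases Nat.even_or_odd d with he | ho
    · have h0 := Ftrig_even d k hd he
      rw [he.neg_one_pow, h0]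
      push_cast
      ring
    · have h0 := Ftrig_odd d k hd (Nat.not_even_iff_odd.mpr ho)
      rw [ho.neg_one_pow, h0]
      push_cast
      ring
  rw [key, mul_zero]

/-- Distinctness of the tangent values. -/
lemma Ftan_inj (d : ℕ) (hd : 1 ≤ d) (a : ℝ) (ha : 0 < a) :
    ∀ j < d, ∀ k < d, j ≠ k →
      a * Real.tan (Foff d + j * π / d) ≠ a * Real.tan (Foff d + k * π / d) := by
  intro j hj k hk hjk h
  have hπ : (0:ℝ) < π := Real.pi_pos
  have hd' : (d:ℝ) ≠ 0 := by positivity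
  have hcj := Fcos_ne d j hd
  have hck := Fcos_ne d k hd
  have htan : Real.tan (Foff d + j * π / d) = Real.tan (Foff d + k * π / d) :=
    mul_left_cancel₀ (ne_of_gt ha) h
  rw [Real.tan_eq_sin_div_cos, Real.tan_eq_sin_div_cos, div_eq_div_iff hcj hck] at htan
  have hsin : Real.sin ((Foff d + j * π / d) - (Foff d + k * π / d)) = 0 := by
    rw [Real.sin_sub]
    linarith [htan]
  rw [Real.sin_eq_zero_iff] at hsin
  obtain ⟨n, hn⟩ := hsin
  have key : (n : ℝ) * d = (j : ℝ) - k := by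
    have h2 : (n : ℝ) * π * d = ((j : ℝ) - k) * π := by
      have : (Foff d + j * π / d) - (Foff d + k * π / d) = ((j : ℝ) - k) * π / d := by ring
      rw [this] at hn
      field_simp at hn
      linear_combination π * hn
    have := mul_right_cancel₀ (ne_of_gt hπ) (by linarith [h2] : ((n : ℝ) * d) * π = ((j : ℝ) - k) * π)
    exact this
  have keyz : (n : ℤ) * d = (j : ℤ) - k := by exact_mod_cast key
  have h1 : (j : ℤ) < d := by exact_mod_cast hj
  have h2 : (k : ℤ) < d := by exact_mod_cast hk
  have hdz : (1 : ℤ) ≤ d := by exact_mod_cast hd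
  have hj0 : (0 : ℤ) ≤ j := Int.ofNat_nonneg j
  have hk0 : (0 : ℤ) ≤ k := Int.ofNat_nonneg k
  rcases lt_trichotomy n 0 with hn0 | hn0 | hn0
  · have hle : n ≤ -1 := by omega
    have hmul : n * (d : ℤ) ≤ (-1) * d :=
      mul_le_mul_of_nonneg_right hle (by omega)
    linarith [keyz, hmul]
  · apply hjk
    rw [hn0, zero_mul] at keyz
    have : (j : ℤ) = k := by omega
    exact_mod_cast this
  · have hle : (1 : ℤ) ≤ n := by omega
    have hmul : (1 : ℤ) * d ≤ n * d :=
      mul_le_mul_of_nonneg_right hle (by omega)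
    linarith [keyz, hmul]

open Polynomial in
theorem F_roots (d : ℕ) (hd : 2 ≤ d) (a : ℝ) (ha : 0 < a) :
    (∀ j < d, ∀ k < d, j ≠ k →
        a * Real.tan ((if Even d then π / (2 * d) else 0) + j * π / d) ≠
          a * Real.tan ((if Even d then π / (2 * d) else 0) + k * π / d)) ∧
      (∀ x : ℂ, ((x + a * Complex.I) ^ d + (x - a * Complex.I) ^ d) / 2 = 0 ↔
        ∃ k < d, x = ((a * Real.tan ((if Even d then π / (2 * d) else 0) + k * π / d) : ℝ) : ℂ)) := by
  have hd1 : 1 ≤ d := le_trans one_le_two hd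
  have hoff : (if Even d then π / (2 * (d:ℝ)) else 0) = Foff d := rfl
  rw [hoff]
  refine ⟨Ftan_inj d hd1 a ha, ?_⟩
  intro x
  set f : ℕ → ℂ := fun k => ((a * Real.tan (Foff d + k * π / d) : ℝ) : ℂ) with hf
  set c : ℂ := (a : ℂ) * Complex.I with hc
  set P : Polynomial ℂ := (X + C c) ^ d + (X - C c) ^ d with hP
  have hevalP : ∀ y : ℂ, P.eval y = (y + a * Complex.I) ^ d + (y - a * Complex.I) ^ d := by
    intro y; simp [hP, hc]
  have hm1 : ((X + C c) ^ d).Monic := (monic_X_add_C c).pow d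
  have hm2 : ((X - C c) ^ d).Monic := (monic_X_sub_C c).pow d
  have hdeg1 : ((X + C c) ^ d).natDegree = d := by
    simp [natDegree_pow, natDegree_X_add_C]
  have hdeg2 : ((X - C c) ^ d).natDegree = d := by
    simp [natDegree_pow, natDegree_X_sub_C]
  have c1 : ((X + C c) ^ d).coeff d = 1 := by
    have := hm1.coeff_natDegree; rwa [hdeg1] at this
  have c2 : ((X - C c) ^ d).coeff d = 1 := by
    have := hm2.coeff_natDegree; rwa [hdeg2] at this
  have hcoeff : P.coeff d = 2 := by rw [hP, coeff_add, c1, c2]; norm_num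
  have hP0 : P ≠ 0 := by
    intro h
    rw [h] at hcoeff
    simp at hcoeff
  have hdegP : P.natDegree ≤ d := by
    refine le_trans (natDegree_add_le _ _) ?_
    simp [hdeg1, hdeg2]
  have hroots : Multiset.card P.roots ≤ d := le_trans (card_roots' P) hdegP
  have hinj : Set.InjOn f (Finset.range d) := by
    intro j hj k hk hfe
    simp only [Finset.coe_range, Set.mem_Iio] at hj hk
    simp only [hf] at hfe
    by_contra hjk
    exact Ftan_inj d hd1 a ha j hj k hk hjk (by exact_mod_cast hfe)
  set S : Finset ℂ := (Finset.range d).image f with hS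
  have hcardS : S.card = d := by
    rw [hS, Finset.card_image_of_injOn hinj, Finset.card_range]
  have hSsub : ∀ y ∈ S, y ∈ P.roots := by
    intro y hy
    rw [hS, Finset.mem_image] at hy
    obtain ⟨k, hk, rfl⟩ := hy
    refine mem_roots'.2 ⟨hP0, ?_⟩
    rw [IsRoot, hevalP]
    exact Froot d k hd1 a
  have hle : S.val ≤ P.roots := (Multiset.le_iff_subset S.nodup).2 hSsub
  have heq : S.val = P.roots :=
    Multiset.eq_of_le_of_card_le hle (by rw [show Multiset.card S.val = S.card from rfl, hcardS]; exact hroots)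
  constructor
  · intro hx
    have hnum : (x + a * Complex.I) ^ d + (x - a * Complex.I) ^ d = 0 := by
      field_simp at hx
      rw [mul_zero] at hx
      exact hx
    have hxr : x ∈ P.roots := mem_roots'.2 ⟨hP0, by rw [IsRoot, hevalP]; exact hnum⟩
    rw [← heq] at hxr
    have : x ∈ S := hxr
    rw [hS, Finset.mem_image] at this
    obtain ⟨k, hk, hfk⟩ := this
    exact ⟨k, Finset.mem_range.1 hk, hfk.symm⟩
  · rintro ⟨k, hk, rfl⟩
    rw [_root_.div_eq_zero_iff]
    left
    rw [hc]
    exact Froot d k hd1 a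
end

section
/- For all complex x and all real γ, a, d ≥ 2 with sin(dπ/2 + dγ) ≠ 0 and cos(γ + kπ/d) ≠ 0 for all k, the identity ∏_{k=0}^{d−1} (x − tan(γ + kπ/d)) = ½[(1 − i·cot(dπ/2 + dγ))(x + i)^d + (1 + i·cot(dπ/2 + dγ))(x − i)^d] holds. -/
open Real Finset

lemma prod_unity (d : ℕ) (hd : 0 < d) (B c : ℂ) :
    ∏ k ∈ Finset.range d, (B - Complex.exp (2 * π * Complex.I / d) ^ k * c) = B ^ d - c ^ d := by
  have hζ := Complex.isPrimitiveRoot_exp d hd.ne'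
  have h := X_pow_sub_C_eq_prod hζ hd (rfl : c ^ d = c ^ d)
  have h2 := congrArg (Polynomial.eval B) h
  simp only [Polynomial.eval_sub, Polynomial.eval_pow, Polynomial.eval_X, Polynomial.eval_C,
    Polynomial.eval_prod, Polynomial.eval_mul] at h2
  exact h2.symm

theorem prod_linear_tan_identity (d : ℕ) (hd : 2 ≤ d) (γ : ℝ)
    (h1 : Real.sin (d * π / 2 + d * γ) ≠ 0)
    (h2 : ∀ k < d, Real.cos (γ + k * π / d) ≠ 0) (x : ℂ) :
    ∏ k ∈ Finset.range d, (x - (Real.tan (γ + k * π / d) : ℂ)) =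
      (1 / 2) * ((1 - Complex.I * (Real.cot (d * π / 2 + d * γ) : ℂ)) * (x + Complex.I) ^ d +
        (1 + Complex.I * (Real.cot (d * π / 2 + d * γ) : ℂ)) * (x - Complex.I) ^ d) := by
  have hd0 : 0 < d := by omega
  have hdC : (d : ℂ) ≠ 0 := by exact_mod_cast hd0.ne'
  set θ : ℝ := d * π / 2 + d * γ with hθ
  set I := Complex.I
  -- abbrev for complex angle
  set α : ℕ → ℝ := fun k => γ + k * π / d with hα
  have hcosC : ∀ k < d, Complex.cos (α k) ≠ 0 := by
    intro k hk
    rw [← Complex.ofReal_cos]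
    exact_mod_cast fun h => h2 k hk (by exact_mod_cast h)
  -- Step 1: each factor
  have hfac : ∀ k ∈ Finset.range d, (x - (Real.tan (α k) : ℂ)) =
      (Complex.exp (α k * I) * (x + I) + Complex.exp (-(α k) * I) * (x - I)) /
        (Complex.exp (α k * I) + Complex.exp (-(α k) * I)) := by
    intro k hk
    have hc := hcosC k (Finset.mem_range.mp hk)
    rw [Complex.ofReal_tan, Complex.tan_eq_sin_div_cos]
    rw [Complex.cos] at hc
    rw [Complex.sin, Complex.cos]
    set u := Complex.exp ((α k : ℂ) * I) with hu
    set v := Complex.exp (-(α k : ℂ) * I) with hv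
    have hsum : u + v ≠ 0 := by
      intro h; apply hc; rw [h]; simp
    have h2ne : (2:ℂ) ≠ 0 := two_ne_zero
    field_simp
    ring
  rw [Finset.prod_congr rfl hfac, Finset.prod_div_distrib]
  set ζ := Complex.exp (2 * π * Complex.I / d) with hζ
  set e := Complex.exp (2 * (γ:ℂ) * I) with he
  have hexp : ∀ k : ℕ, Complex.exp ((α k : ℂ) * I) =
      Complex.exp (-(α k : ℂ) * I) * (e * ζ ^ k) := by
    intro k
    rw [hζ, ← Complex.exp_nat_mul, he, ← Complex.exp_add, ← Complex.exp_add]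
    congr 1
    simp only [hα]
    push_cast
    field_simp
    ring
  have hnum : ∀ k ∈ Finset.range d,
      Complex.exp ((α k : ℂ) * I) * (x + I) + Complex.exp (-(α k : ℂ) * I) * (x - I) =
        Complex.exp (-(α k : ℂ) * I) * ((x - I) - ζ ^ k * (-(e * (x + I)))) := by
    intro k _; rw [hexp k]; ring
  have hden : ∀ k ∈ Finset.range d,
      Complex.exp ((α k : ℂ) * I) + Complex.exp (-(α k : ℂ) * I) =
        Complex.exp (-(α k : ℂ) * I) * ((1:ℂ) - ζ ^ k * (-e)) := by
    intro k _; rw [hexp k]; ring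
  rw [Finset.prod_congr rfl hnum, Finset.prod_congr rfl hden,
    Finset.prod_mul_distrib, Finset.prod_mul_distrib]
  have hE : ∏ k ∈ Finset.range d, Complex.exp (-(α k : ℂ) * I) ≠ 0 :=
    Finset.prod_ne_zero_iff.mpr fun k _ => Complex.exp_ne_zero _
  rw [mul_div_mul_left _ _ hE, prod_unity d hd0, prod_unity d hd0, one_pow]
  -- now identify (-e)^d with exp(θ I)^2
  set u := Complex.exp ((θ:ℂ) * I) with hu
  have hed : (-e) ^ d = u ^ 2 := by
    have h1e : -e = Complex.exp ((π:ℂ) * I + 2 * (γ:ℂ) * I) := by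
      rw [Complex.exp_add, Complex.exp_pi_mul_I, he]; ring
    rw [h1e, ← Complex.exp_nat_mul, hu, ← Complex.exp_nat_mul]
    congr 1
    rw [hθ]; push_cast; ring
  have hcd : (-(e * (x + I))) ^ d = u ^ 2 * (x + I) ^ d := by
    rw [show -(e * (x + I)) = (-e) * (x + I) by ring, mul_pow, hed]
  rw [hcd, hed]
  -- final algebra
  have hu0 : u ≠ 0 := Complex.exp_ne_zero _
  have hv : Complex.exp (-(θ:ℂ) * I) = u⁻¹ := by
    rw [hu, ← Complex.exp_neg]; ring_nf
  have hsθ : Complex.sin (θ:ℂ) ≠ 0 := by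
    rw [← Complex.ofReal_sin]
    exact_mod_cast fun h => h1 (by exact_mod_cast h)
  have hsin : Complex.sin (θ:ℂ) = (u⁻¹ - u) * I / 2 := by
    rw [Complex.sin, hv, hu]
  have hcos : Complex.cos (θ:ℂ) = (u + u⁻¹) / 2 := by
    rw [Complex.cos, hv, hu]
  have hne : u⁻¹ - u ≠ 0 := by
    intro h; apply hsθ; rw [hsin, h]; ring
  have h1mu2 : (1:ℂ) - u ^ 2 ≠ 0 := by
    intro h; apply hne
    have : u * (u⁻¹ - u) = 1 - u ^ 2 := by field_simp
    have := this.trans h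
    exact (mul_eq_zero.mp this).resolve_left hu0
  have hcot : I * ((Real.cot θ : ℝ) : ℂ) = (u ^ 2 + 1) / (1 - u ^ 2) := by
    rw [Real.cot_eq_cos_div_sin, Complex.ofReal_div, Complex.ofReal_cos, Complex.ofReal_sin,
      hsin, hcos]
    field_simp [hu0, hne, h1mu2]
    exact mul_div_cancel_left₀ _ Complex.I_ne_zero
  rw [hcot]
  field_simp
  ring
end

section
/- For d ≥ 2 and γ ∈ ℝ with all terms defined, ∑_{k=0}^{d−1} tan(γ + kπ/d) = −d·cot(dπ/2 + dγ). -/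
open Real Finset

private lemma prod_nthRoots_sub (d : ℕ) (hd : 0 < d) (z : ℂ) :
    ∏ μ ∈ Polynomial.nthRootsFinset d (1 : ℂ), (z - μ) = z ^ d - 1 := by
  have h := Polynomial.X_pow_sub_one_eq_prod (R := ℂ) hd (Complex.isPrimitiveRoot_exp d hd.ne')
  have h2 := congrArg (Polynomial.eval z) h
  simpa [Polynomial.eval_prod] using h2.symm

private lemma sum_prod_erase (d : ℕ) (hd : 0 < d) (w : ℂ) :
    ∑ μ ∈ Polynomial.nthRootsFinset d (1 : ℂ),
      ∏ ν ∈ (Polynomial.nthRootsFinset d (1 : ℂ)).erase μ, (w - ν) = d * w ^ (d - 1) := by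
  classical
  have hF : HasDerivAt (fun z : ℂ => ∏ μ ∈ Polynomial.nthRootsFinset d (1 : ℂ), (z - μ))
      (∑ μ ∈ Polynomial.nthRootsFinset d (1 : ℂ),
        (∏ ν ∈ (Polynomial.nthRootsFinset d (1 : ℂ)).erase μ, (w - ν)) • (1 : ℂ)) w :=
    HasDerivAt.fun_finsetProd (fun μ _ => (hasDerivAt_id w).sub_const μ)
  have hG : HasDerivAt (fun z : ℂ => z ^ d - 1) ((d : ℂ) * w ^ (d - 1)) w :=
    (hasDerivAt_pow d w).sub_const 1
  have he : (fun z : ℂ => ∏ μ ∈ Polynomial.nthRootsFinset d (1 : ℂ), (z - μ))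
      = fun z : ℂ => z ^ d - 1 := funext (prod_nthRoots_sub d hd)
  rw [he] at hF
  simpa [smul_eq_mul] using hF.unique hG

private lemma sum_inv_sub (d : ℕ) (hd : 0 < d) (w : ℂ) (hw : w ^ d ≠ 1) :
    ∑ μ ∈ Polynomial.nthRootsFinset d (1 : ℂ), (w - μ)⁻¹ = d * w ^ (d - 1) / (w ^ d - 1) := by
  classical
  have hne : ∀ μ ∈ Polynomial.nthRootsFinset d (1 : ℂ), w - μ ≠ 0 := by
    intro μ hμ h
    have hwμ : w = μ := by linear_combination h
    exact hw (hwμ ▸ (Polynomial.mem_nthRootsFinset hd (1 : ℂ)).1 hμ)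
  have hp0 : (w ^ d - 1) ≠ 0 := sub_ne_zero.2 hw
  rw [eq_div_iff hp0, ← prod_nthRoots_sub d hd w, ← sum_prod_erase d hd w, Finset.sum_mul]
  refine Finset.sum_congr rfl fun μ hμ => ?_
  rw [← Finset.mul_prod_erase _ _ hμ, inv_mul_cancel_left₀ (hne μ hμ)]



private lemma sum_ratio (d : ℕ) (hd : 0 < d) (w : ℂ) (hw : w ^ d ≠ 1) :
    ∑ μ ∈ Polynomial.nthRootsFinset d (1 : ℂ), (w * μ + 1) / (w * μ - 1)
      = d * (w ^ d + 1) / (w ^ d - 1) := by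
  classical
  have hp0 : (w ^ d - 1) ≠ 0 := sub_ne_zero.2 hw
  have hcard : (Polynomial.nthRootsFinset d (1 : ℂ)).card = d :=
    (Complex.isPrimitiveRoot_exp d hd.ne').card_nthRootsFinset
  have hμ0 : ∀ μ ∈ Polynomial.nthRootsFinset d (1 : ℂ), μ ≠ 0 := by
    intro μ hμ h
    have h1 : μ ^ d = 1 := (Polynomial.mem_nthRootsFinset hd (1 : ℂ)).1 hμ
    rw [h, zero_pow hd.ne'] at h1
    exact zero_ne_one h1
  have hwm : ∀ μ ∈ Polynomial.nthRootsFinset d (1 : ℂ), w - μ ≠ 0 := by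
    intro μ hμ h
    have hwμ : w = μ := by linear_combination h
    exact hw (hwμ ▸ (Polynomial.mem_nthRootsFinset hd (1 : ℂ)).1 hμ)
  have hterm : ∀ μ ∈ Polynomial.nthRootsFinset d (1 : ℂ), w * μ - 1 ≠ 0 := by
    intro μ hμ h
    have h1 : w * μ = 1 := by linear_combination h
    have h2 : w ^ d * μ ^ d = 1 := by rw [← mul_pow, h1, one_pow]
    rw [(Polynomial.mem_nthRootsFinset hd (1 : ℂ)).1 hμ, mul_one] at h2
    exact hw h2
  have hw1 : w ^ (d - 1) * w = w ^ d := by rw [← pow_succ, Nat.sub_add_cancel hd]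
  have hinv : ∑ μ ∈ Polynomial.nthRootsFinset d (1 : ℂ), (w * μ - 1)⁻¹ = d / (w ^ d - 1) := by
    have hre : ∑ μ ∈ Polynomial.nthRootsFinset d (1 : ℂ), (w * μ - 1)⁻¹
        = ∑ μ ∈ Polynomial.nthRootsFinset d (1 : ℂ), (w * μ⁻¹ - 1)⁻¹ := by
      refine Finset.sum_nbij' (fun μ => μ⁻¹) (fun μ => μ⁻¹) ?_ ?_ ?_ ?_ ?_
      · intro μ hμ
        refine (Polynomial.mem_nthRootsFinset hd (1 : ℂ)).2 ?_
        rw [inv_pow, (Polynomial.mem_nthRootsFinset hd (1 : ℂ)).1 hμ, inv_one]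
      · intro μ hμ
        refine (Polynomial.mem_nthRootsFinset hd (1 : ℂ)).2 ?_
        rw [inv_pow, (Polynomial.mem_nthRootsFinset hd (1 : ℂ)).1 hμ, inv_one]
      · intro μ hμ; simp
      · intro μ hμ; simp
      · intro μ hμ; rw [inv_inv]
    rw [hre]
    have hre2 : ∑ μ ∈ Polynomial.nthRootsFinset d (1 : ℂ), (w * μ⁻¹ - 1)⁻¹
        = ∑ μ ∈ Polynomial.nthRootsFinset d (1 : ℂ), (w * (w - μ)⁻¹ - 1) := by
      refine Finset.sum_congr rfl fun μ hμ => ?_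
      have h1 : w * μ⁻¹ - 1 = (w - μ) / μ := by
        field_simp [hμ0 μ hμ]
      rw [h1, inv_div, div_eq_mul_inv]
      have h2 := mul_inv_cancel₀ (hwm μ hμ)
      linear_combination -h2
    rw [hre2, Finset.sum_sub_distrib, ← Finset.mul_sum, sum_inv_sub d hd w hw,
      Finset.sum_const, hcard, nsmul_eq_mul, mul_one]
    field_simp
    linear_combination (d:ℂ) * hw1
  have hre3 : ∑ μ ∈ Polynomial.nthRootsFinset d (1 : ℂ), (w * μ + 1) / (w * μ - 1)
      = ∑ μ ∈ Polynomial.nthRootsFinset d (1 : ℂ), (1 + 2 * (w * μ - 1)⁻¹) := by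
    refine Finset.sum_congr rfl fun μ hμ => ?_
    field_simp [hterm μ hμ]
    ring
  rw [hre3, Finset.sum_add_distrib, Finset.sum_const, hcard, ← Finset.mul_sum, hinv,
    nsmul_eq_mul, mul_one]
  field_simp
  ring


private lemma sum_range_root (d : ℕ) (hd : 0 < d) (f : ℂ → ℂ) :
    ∑ k ∈ Finset.range d, f (Complex.exp (2 * (π : ℂ) * Complex.I / (d : ℂ)) ^ k)
      = ∑ μ ∈ Polynomial.nthRootsFinset d (1 : ℂ), f μ := by
  classical
  have hζ : IsPrimitiveRoot (Complex.exp (2 * (π : ℂ) * Complex.I / (d : ℂ))) d :=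
    Complex.isPrimitiveRoot_exp d hd.ne'
  have himg : (Finset.range d).image (fun k => Complex.exp (2 * (π : ℂ) * Complex.I / (d : ℂ)) ^ k)
      = Polynomial.nthRootsFinset d (1 : ℂ) := by
    apply Finset.eq_of_subset_of_card_le
    · intro x hx
      simp only [Finset.mem_image] at hx
      obtain ⟨k, -, rfl⟩ := hx
      refine (Polynomial.mem_nthRootsFinset hd (1 : ℂ)).2 ?_
      rw [← pow_mul, mul_comm k d, pow_mul, hζ.pow_eq_one, one_pow]
    · rw [hζ.card_nthRootsFinset,
        Finset.card_image_of_injOn hζ.injOn_pow, Finset.card_range]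
  rw [← himg, Finset.sum_image
    (fun a ha b hb h => hζ.injOn_pow (by simpa using ha) (by simpa using hb) h)]

private lemma cexp_ne_neg_one {z : ℂ} (h : Complex.cos z ≠ 0) :
    Complex.exp (2 * z * Complex.I) ≠ -1 := by
  intro ht
  apply h
  have ha := Complex.exp_ne_zero (z * Complex.I)
  have h2 : Complex.exp (2 * z * Complex.I)
      = Complex.exp (z * Complex.I) * Complex.exp (z * Complex.I) := by
    rw [← Complex.exp_add]; congr 1; ring
  have hb : Complex.exp (-z * Complex.I) = (Complex.exp (z * Complex.I))⁻¹ := by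
    rw [← Complex.exp_neg]; congr 1; ring
  rw [h2] at ht
  rw [Complex.cos, hb]
  field_simp
  linear_combination ht

private lemma cexp_ne_one {z : ℂ} (h : Complex.sin z ≠ 0) :
    Complex.exp (2 * z * Complex.I) ≠ 1 := by
  intro ht
  apply h
  have ha := Complex.exp_ne_zero (z * Complex.I)
  have h2 : Complex.exp (2 * z * Complex.I)
      = Complex.exp (z * Complex.I) * Complex.exp (z * Complex.I) := by
    rw [← Complex.exp_add]; congr 1; ring
  have hb : Complex.exp (-z * Complex.I) = (Complex.exp (z * Complex.I))⁻¹ := by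
    rw [← Complex.exp_neg]; congr 1; ring
  rw [h2] at ht
  rw [Complex.sin, hb]
  field_simp
  linear_combination -Complex.I * ht

private lemma tan_formula {z : ℂ} (h : Complex.cos z ≠ 0) :
    Complex.tan z = -Complex.I * (Complex.exp (2 * z * Complex.I) - 1)
      / (Complex.exp (2 * z * Complex.I) + 1) := by
  have hden : Complex.exp (2 * z * Complex.I) + 1 ≠ 0 := by
    intro H; exact cexp_ne_neg_one h (by linear_combination H)
  have ha := Complex.exp_ne_zero (z * Complex.I)
  have h2 : Complex.exp (2 * z * Complex.I)
      = Complex.exp (z * Complex.I) * Complex.exp (z * Complex.I) := by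
    rw [← Complex.exp_add]; congr 1; ring
  have hb : Complex.exp (-z * Complex.I) = (Complex.exp (z * Complex.I))⁻¹ := by
    rw [← Complex.exp_neg]; congr 1; ring
  rw [Complex.tan_eq_sin_div_cos, div_eq_div_iff h hden]
  rw [h2] at hden ⊢
  rw [Complex.sin, Complex.cos, hb]
  field_simp
  ring

private lemma cot_formula {z : ℂ} (h : Complex.sin z ≠ 0) :
    Complex.cot z = Complex.I * (Complex.exp (2 * z * Complex.I) + 1)
      / (Complex.exp (2 * z * Complex.I) - 1) := by
  have hden : Complex.exp (2 * z * Complex.I) - 1 ≠ 0 := sub_ne_zero.2 (cexp_ne_one h)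
  have ha := Complex.exp_ne_zero (z * Complex.I)
  have h2 : Complex.exp (2 * z * Complex.I)
      = Complex.exp (z * Complex.I) * Complex.exp (z * Complex.I) := by
    rw [← Complex.exp_add]; congr 1; ring
  have hb : Complex.exp (-z * Complex.I) = (Complex.exp (z * Complex.I))⁻¹ := by
    rw [← Complex.exp_neg]; congr 1; ring
  rw [Complex.cot_eq_cos_div_sin, div_eq_div_iff h hden]
  rw [h2] at hden ⊢
  rw [Complex.sin, Complex.cos, hb]
  field_simp
  linear_combination (Complex.exp (z * Complex.I) ^ 4 - 1) * Complex.I_sq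

theorem sum_tan_eq (d : ℕ) (hd : 2 ≤ d) (γ : ℝ)
    (h1 : Real.sin (d * π / 2 + d * γ) ≠ 0)
    (h2 : ∀ k < d, Real.cos (γ + k * π / d) ≠ 0) :
    ∑ k ∈ Finset.range d, Real.tan (γ + k * π / d) =
      -d * Real.cot (d * π / 2 + d * γ) := by
  have hd0 : 0 < d := by omega
  have key : ((∑ k ∈ Finset.range d, Real.tan (γ + k * π / d) : ℝ) : ℂ)
      = ((-d * Real.cot (d * π / 2 + d * γ) : ℝ) : ℂ) := by
    push_cast [Complex.ofReal_tan, Complex.ofReal_cot]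
    have hsinZ : Complex.sin ((d : ℂ) * (π : ℂ) / 2 + (d : ℂ) * (γ : ℂ)) ≠ 0 := by
      have hc : (((d : ℝ) * π / 2 + (d : ℝ) * γ : ℝ) : ℂ)
          = (d : ℂ) * (π : ℂ) / 2 + (d : ℂ) * (γ : ℂ) := by push_cast; ring
      rw [← hc, ← Complex.ofReal_sin]
      exact Complex.ofReal_ne_zero.2 h1
    have hT : Complex.exp (2 * ((d : ℂ) * (π : ℂ) / 2 + (d : ℂ) * (γ : ℂ)) * Complex.I)
        = (-Complex.exp (2 * (γ : ℂ) * Complex.I)) ^ d := by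
      rw [show 2 * ((d : ℂ) * (π : ℂ) / 2 + (d : ℂ) * (γ : ℂ)) * Complex.I
          = (d : ℂ) * ((π : ℂ) * Complex.I + 2 * (γ : ℂ) * Complex.I) by ring,
        Complex.exp_nat_mul, Complex.exp_add, Complex.exp_pi_mul_I, neg_one_mul]
    have hvd : (-Complex.exp (2 * (γ : ℂ) * Complex.I)) ^ d ≠ 1 := by
      rw [← hT]; exact cexp_ne_one hsinZ
    have hterm : ∀ k ∈ Finset.range d, Complex.tan ((γ : ℂ) + (k : ℂ) * (π : ℂ) / (d : ℂ))
        = -Complex.I * (((-Complex.exp (2 * (γ : ℂ) * Complex.I))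
              * Complex.exp (2 * (π : ℂ) * Complex.I / (d : ℂ)) ^ k + 1)
            / ((-Complex.exp (2 * (γ : ℂ) * Complex.I))
              * Complex.exp (2 * (π : ℂ) * Complex.I / (d : ℂ)) ^ k - 1)) := by
      intro k hk
      have hcos : Complex.cos ((γ : ℂ) + (k : ℂ) * (π : ℂ) / (d : ℂ)) ≠ 0 := by
        have hc : ((γ + (k : ℝ) * π / (d : ℝ) : ℝ) : ℂ)
            = (γ : ℂ) + (k : ℂ) * (π : ℂ) / (d : ℂ) := by push_cast; ring
        rw [← hc, ← Complex.ofReal_cos]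
        exact Complex.ofReal_ne_zero.2 (h2 k (Finset.mem_range.1 hk))
      rw [tan_formula hcos]
      have hexp : Complex.exp (2 * ((γ : ℂ) + (k : ℂ) * (π : ℂ) / (d : ℂ)) * Complex.I)
          = Complex.exp (2 * (γ : ℂ) * Complex.I)
            * Complex.exp (2 * (π : ℂ) * Complex.I / (d : ℂ)) ^ k := by
        rw [show 2 * ((γ : ℂ) + (k : ℂ) * (π : ℂ) / (d : ℂ)) * Complex.I
            = 2 * (γ : ℂ) * Complex.I + (k : ℂ) * (2 * (π : ℂ) * Complex.I / (d : ℂ)) by ring,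
          Complex.exp_add, Complex.exp_nat_mul]
      rw [hexp]
      rw [show (-Complex.exp (2 * (γ : ℂ) * Complex.I))
            * Complex.exp (2 * (π : ℂ) * Complex.I / (d : ℂ)) ^ k + 1
          = -(Complex.exp (2 * (γ : ℂ) * Complex.I)
            * Complex.exp (2 * (π : ℂ) * Complex.I / (d : ℂ)) ^ k - 1) by ring,
        show (-Complex.exp (2 * (γ : ℂ) * Complex.I))
            * Complex.exp (2 * (π : ℂ) * Complex.I / (d : ℂ)) ^ k - 1
          = -(Complex.exp (2 * (γ : ℂ) * Complex.I)
            * Complex.exp (2 * (π : ℂ) * Complex.I / (d : ℂ)) ^ k + 1) by ring,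
        neg_div_neg_eq, mul_div_assoc]
    have hswap : ∑ k ∈ Finset.range d,
          (((-Complex.exp (2 * (γ : ℂ) * Complex.I))
              * Complex.exp (2 * (π : ℂ) * Complex.I / (d : ℂ)) ^ k + 1)
            / ((-Complex.exp (2 * (γ : ℂ) * Complex.I))
              * Complex.exp (2 * (π : ℂ) * Complex.I / (d : ℂ)) ^ k - 1))
        = ∑ μ ∈ Polynomial.nthRootsFinset d (1 : ℂ),
          (((-Complex.exp (2 * (γ : ℂ) * Complex.I)) * μ + 1)
            / ((-Complex.exp (2 * (γ : ℂ) * Complex.I)) * μ - 1)) :=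
      sum_range_root d hd0 (fun μ =>
        ((-Complex.exp (2 * (γ : ℂ) * Complex.I)) * μ + 1)
          / ((-Complex.exp (2 * (γ : ℂ) * Complex.I)) * μ - 1))
    rw [Finset.sum_congr rfl hterm, ← Finset.mul_sum, hswap,
      sum_ratio d hd0 _ hvd, cot_formula hsinZ, hT]
    ring
  exact_mod_cast key
end

section
/- If f(x) = x^d + c_{d−1}x^{d−1} + … + c₀ = ∏_{k=1}^d (x − x_k) is a monic real polynomial with d distinct real roots that is a critical point of the function ∑_{j<k} log(x_j − x_k)² subject to the constraint ∑_k ½ log(1 + x_k²) = log m (via Lagrange multiplier λ), then f satisfies the differential equation (x²+1)f″(x) − λx f′(x) + d(λ − d + 1)f(x) = 0. -/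
open Polynomial Finset

lemma deriv_prod_finset {R ι : Type*} [CommRing R] [DecidableEq ι] (s : Finset ι) (g : ι → R[X]) :
    derivative (∏ i ∈ s, g i) = ∑ i ∈ s, (∏ j ∈ s.erase i, g j) * derivative (g i) := by
  induction s using Finset.induction_on with
  | empty => simp
  | insert a s ha ih =>
    rw [Finset.prod_insert ha, derivative_mul, ih, Finset.sum_insert ha,
        Finset.erase_insert ha, Finset.mul_sum, mul_comm (derivative (g a))]
    congr 1
    refine Finset.sum_congr rfl fun i hi => ?_
    rw [Finset.erase_insert_of_ne (by rintro rfl; exact ha hi),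
        Finset.prod_insert (fun h => ha (Finset.mem_of_mem_erase h)), mul_assoc]

theorem critical_point_ode (d : ℕ) (hd : 2 ≤ d) (x : Fin d → ℝ) (hx : Function.Injective x)
    (lam : ℝ)
    (hlag : ∀ k : Fin d, ∑ j ∈ Finset.univ.erase k, 2 / (x k - x j) =
      lam * x k / (x k ^ 2 + 1)) :
    (Polynomial.X ^ 2 + 1) * Polynomial.derivative
        (Polynomial.derivative (∏ k, (Polynomial.X - Polynomial.C (x k)))) -
      Polynomial.C lam * Polynomial.X *
        Polynomial.derivative (∏ k, (Polynomial.X - Polynomial.C (x k))) +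
      Polynomial.C ((d : ℝ) * (lam - d + 1)) * ∏ k, (Polynomial.X - Polynomial.C (x k)) = 0 := by
  classical
  set f : ℝ[X] := ∏ k, (X - C (x k)) with hf
  set g : ℝ[X] := (X ^ 2 + 1) * derivative (derivative f) - C lam * X * derivative f +
      C ((d : ℝ) * (lam - d + 1)) * f with hg
  show g = 0
  have hne : ∀ {i j : Fin d}, i ≠ j → x i - x j ≠ 0 := fun h =>
    sub_ne_zero.mpr fun e => h (hx e)
  have hdf : derivative f = ∑ i, ∏ j ∈ univ.erase i, (X - C (x j)) := by
    rw [hf, deriv_prod_finset]; simp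
  have hddf : derivative (derivative f) =
      ∑ i, ∑ j ∈ univ.erase i, ∏ l ∈ (univ.erase i).erase j, (X - C (x l)) := by
    rw [hdf, derivative_sum]
    refine Finset.sum_congr rfl fun i _ => ?_
    rw [deriv_prod_finset]; simp
  have hevalP : ∀ (s : Finset (Fin d)) (k), k ∈ s →
      (∏ j ∈ s, (X - C (x j)) : ℝ[X]).eval (x k) = 0 := by
    intro s k hk
    rw [eval_prod]
    exact Finset.prod_eq_zero hk (by simp)
  have hevalf : ∀ k, f.eval (x k) = 0 := fun k => hevalP univ k (mem_univ k)
  have hevaldf : ∀ k, (derivative f).eval (x k) = ∏ j ∈ univ.erase k, (x k - x j) := by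
    intro k
    rw [hdf, eval_finset_sum, Finset.sum_eq_single k]
    · simp [eval_prod]
    · intro i _ hik
      exact hevalP _ _ (Finset.mem_erase.mpr ⟨Ne.symm hik, mem_univ k⟩)
    · simp
  have hevalddf : ∀ k, (derivative (derivative f)).eval (x k) =
      2 * ∑ j ∈ univ.erase k, ∏ l ∈ (univ.erase k).erase j, (x k - x l) := by
    intro k
    rw [hddf, eval_finset_sum]
    rw [← Finset.sum_erase_add _ _ (mem_univ k)]
    have h1 : (∑ j ∈ univ.erase k, ∏ l ∈ (univ.erase k).erase j,
        (X - C (x l)) : ℝ[X]).eval (x k) =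
        ∑ j ∈ univ.erase k, ∏ l ∈ (univ.erase k).erase j, (x k - x l) := by
      rw [eval_finset_sum]
      exact Finset.sum_congr rfl fun j _ => by simp [eval_prod]
    have h2 : ∀ i ∈ univ.erase k,
        (∑ j ∈ univ.erase i, ∏ l ∈ (univ.erase i).erase j, (X - C (x l)) : ℝ[X]).eval (x k) =
        ∏ l ∈ (univ.erase k).erase i, (x k - x l) := by
      intro i hi
      have hik : i ≠ k := (Finset.mem_erase.mp hi).1
      rw [eval_finset_sum, Finset.sum_eq_single k]
      · rw [Finset.erase_right_comm]; simp [eval_prod]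
      · intro j hj hjk
        exact hevalP _ _ (Finset.mem_erase.mpr ⟨Ne.symm hjk,
          Finset.mem_erase.mpr ⟨Ne.symm hik, mem_univ k⟩⟩)
      · intro h
        exact absurd (Finset.mem_erase.mpr ⟨Ne.symm hik, mem_univ k⟩) h
    rw [Finset.sum_congr rfl h2, h1]
    ring
  -- g vanishes at each root
  have hevalg : ∀ k, g.eval (x k) = 0 := by
    intro k
    have hx2 : (x k ^ 2 + 1) ≠ 0 := by positivity
    have hPi : (∑ j ∈ univ.erase k, 2 / (x k - x j)) * ∏ j ∈ univ.erase k, (x k - x j) =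
        2 * ∑ j ∈ univ.erase k, ∏ l ∈ (univ.erase k).erase j, (x k - x l) := by
      rw [Finset.sum_mul, Finset.mul_sum]
      refine Finset.sum_congr rfl fun j hj => ?_
      rw [← Finset.mul_prod_erase _ _ hj]
      have : x k - x j ≠ 0 := hne (Finset.mem_erase.mp hj).1.symm
      field_simp
    have key : (x k ^ 2 + 1) * (2 * ∑ j ∈ univ.erase k,
        ∏ l ∈ (univ.erase k).erase j, (x k - x l)) =
        lam * x k * ∏ j ∈ univ.erase k, (x k - x j) := by
      rw [← hPi, hlag k]
      field_simp
    simp only [hg, eval_add, eval_sub, eval_mul, eval_pow, eval_X, eval_C, eval_one,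
      hevalf, hevaldf, hevalddf, mul_zero, add_zero]
    rw [key]; ring
  -- coefficient vanishing for n ≥ d
  have hmonic : f.Monic := monic_prod_of_monic _ _ fun k _ => monic_X_sub_C _
  have hdeg : f.natDegree = d := by
    rw [hf, natDegree_prod _ _ fun k _ => X_sub_C_ne_zero _]
    simp
  have hcoefhi : ∀ n, d < n → f.coeff n = 0 := fun n hn =>
    coeff_eq_zero_of_natDegree_lt (hdeg ▸ hn)
  have hgcoeff : ∀ n, d ≤ n → g.coeff n = 0 := by
    intro n hn
    obtain ⟨m, rfl⟩ : ∃ m, n = m + 2 := ⟨n - 2, (Nat.sub_add_cancel (hd.trans hn)).symm⟩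
    have e1 : ((X ^ 2 + 1 : ℝ[X]) * derivative (derivative f)).coeff (m + 2) =
        (derivative (derivative f)).coeff m + (derivative (derivative f)).coeff (m + 2) := by
      rw [add_mul, one_mul, coeff_add, coeff_X_pow_mul]
    have e2 : ((C lam * X : ℝ[X]) * derivative f).coeff (m + 2) =
        lam * (derivative f).coeff (m + 1) := by
      rw [mul_assoc, coeff_C_mul, coeff_X_mul]
    have e3 : (derivative (derivative f)).coeff m =
        f.coeff (m + 2) * ((m : ℝ) + 1 + 1) * ((m : ℝ) + 1) := by
      rw [coeff_derivative, coeff_derivative]; push_cast; ring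
    have e4 : (derivative (derivative f)).coeff (m + 2) = 0 := by
      rw [coeff_derivative, coeff_derivative, hcoefhi (m + 2 + 1 + 1) (by omega)]
      ring
    have e5 : (derivative f).coeff (m + 1) = f.coeff (m + 2) * ((m : ℝ) + 1 + 1) := by
      rw [coeff_derivative]; push_cast; ring
    rw [hg, coeff_add, coeff_sub, e1, e2, e3, e4, e5, coeff_C_mul]
    rcases eq_or_lt_of_le hn with h | h
    · subst h
      have hc : f.coeff (m + 2) = 1 := by rw [← hdeg]; exact hmonic.coeff_natDegree
      rw [hc]; push_cast; ring
    · rw [hcoefhi _ h]; ring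
  by_cases hg0 : g = 0
  · exact hg0
  · refine eq_zero_of_natDegree_lt_card_of_eval_eq_zero g hx hevalg ?_
    rw [Fintype.card_fin]
    by_contra h
    push_neg at h
    exact hg0 (leadingCoeff_eq_zero.mp (hgcoeff _ h))
end

section
/- Let d ≥ 2, a > 0, and D > 0 with D ≤ 2^(1−d) d^d and D ≥ 1, and set a₀ = 2^(−1+2/d) d^(−1/(d−1)) D^(1/(d(d−1))). Then the polynomial f(x) = ((x+a₀i)^d + (x−a₀i)^d)/2 is monic of degree d with d real roots, has discriminant D, and satisfies |f(a₀ i)| = 2 d^(−d/(d−1)) D^(1/(d−1)) ≤ 1. -/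
open Real Finset Complex Polynomial

noncomputable def om (d k : ℕ) : ℂ := Complex.exp (2*π*Complex.I/d) ^ k * Complex.exp (π*Complex.I/d)

lemma om_pow (d : ℕ) (hd : 0 < d) (k : ℕ) : om d k ^ d = -1 := by
  have hdc : (d:ℂ) ≠ 0 := Nat.cast_ne_zero.mpr hd.ne'
  have h1 : Complex.exp (π*Complex.I/d) ^ d = -1 := by
    rw [← Complex.exp_nat_mul]
    rw [show (d:ℂ) * (π*Complex.I/d) = π * Complex.I by field_simp]
    exact Complex.exp_pi_mul_I
  have h2 : Complex.exp (2*π*Complex.I/d) ^ d = 1 := by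
    rw [← Complex.exp_nat_mul]
    rw [show (d:ℂ) * (2*π*Complex.I/d) = 2*π * Complex.I by field_simp]
    exact Complex.exp_two_pi_mul_I
  rw [om, mul_pow, ← pow_mul, mul_comm k d, pow_mul, h2, one_pow, one_mul, h1]

lemma prod_om (d : ℕ) (hd : 0 < d) (z : ℂ) :
    ∏ k ∈ Finset.range d, (z - om d k) = z ^ d + 1 := by
  have hdc : (d:ℂ) ≠ 0 := Nat.cast_ne_zero.mpr hd.ne'
  have hζ : IsPrimitiveRoot (Complex.exp (2*π*Complex.I/d)) d :=
    Complex.isPrimitiveRoot_exp d hd.ne'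
  have e : Complex.exp (π*Complex.I/d) ^ d = -1 := by
    rw [← Complex.exp_nat_mul]
    rw [show (d:ℂ) * (π*Complex.I/d) = π * Complex.I by field_simp]
    exact Complex.exp_pi_mul_I
  have := X_pow_sub_C_eq_prod hζ hd e
  have := congrArg (Polynomial.eval z) this
  simpa [Polynomial.eval_prod, om, sub_neg_eq_add] using this.symm

lemma prod_om_biv (d : ℕ) (hd : 0 < d) (u v : ℂ) :
    ∏ k ∈ Finset.range d, (u - om d k * v) = u ^ d + v ^ d := by
  rcases eq_or_ne v 0 with rfl | hv
  · simp [zero_pow hd.ne']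
  · have := prod_om d hd (u / v)
    have h2 : ∏ k ∈ Finset.range d, (u - om d k * v) = v ^ d * ∏ k ∈ Finset.range d, (u/v - om d k) := by
      rw [show v ^ d = ∏ _k ∈ Finset.range d, v from by simp, ← Finset.prod_mul_distrib]
      exact Finset.prod_congr rfl fun k _ => by field_simp
    rw [h2, this]
    rw [div_pow, mul_add, mul_one, mul_div_assoc', mul_comm (v^d), mul_div_assoc, div_self (pow_ne_zero d hv), mul_one]

lemma prod_one_sub_om (d : ℕ) (hd : 0 < d) :
    ∏ k ∈ Finset.range d, (1 - om d k) = 2 := by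
  have h := prod_om d hd 1
  norm_num at h
  exact h

lemma prod_om_eq (d : ℕ) (hd : 0 < d) :
    ∏ k ∈ Finset.range d, om d k = (-1) ^ d := by
  have h := prod_om d hd 0
  simp only [zero_sub, zero_pow hd.ne', zero_add] at h
  have h2 : ∏ k ∈ Finset.range d, (-om d k) = (-1)^d * ∏ k ∈ Finset.range d, om d k := by
    rw [show ((-1:ℂ)) ^ d = ∏ _k ∈ Finset.range d, (-1:ℂ) from by simp, ← Finset.prod_mul_distrib]
    exact Finset.prod_congr rfl fun k _ => by ring
  rw [h2] at h
  have : ((-1:ℂ))^d * ((-1:ℂ))^d = 1 := by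
    rw [← mul_pow]; simp
  calc ∏ k ∈ Finset.range d, om d k = (-1)^d * ((-1)^d * ∏ k ∈ Finset.range d, om d k) := by
        rw [← mul_assoc, this, one_mul]
    _ = (-1)^d := by rw [h, mul_one]

lemma poly_om (d : ℕ) (hd : 0 < d) :
    (X ^ d + 1 : Polynomial ℂ) = ∏ k ∈ Finset.range d, (X - Polynomial.C (om d k)) := by
  have hζ : IsPrimitiveRoot (Complex.exp (2*π*Complex.I/d)) d :=
    Complex.isPrimitiveRoot_exp d hd.ne'
  have hdc : (d:ℂ) ≠ 0 := Nat.cast_ne_zero.mpr hd.ne'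
  have e : Complex.exp (π*Complex.I/d) ^ d = -1 := by
    rw [← Complex.exp_nat_mul]
    rw [show (d:ℂ) * (π*Complex.I/d) = π * Complex.I by field_simp]
    exact Complex.exp_pi_mul_I
  have h := X_pow_sub_C_eq_prod hζ hd e
  simpa [om, sub_neg_eq_add] using h

lemma Sk (d : ℕ) (hd : 0 < d) (k : ℕ) (hk : k < d) :
    ∏ j ∈ (Finset.range d).erase k, (om d k - om d j) = d * om d k ^ (d-1) := by
  have hsplit : (X ^ d + 1 : Polynomial ℂ) =
      (X - Polynomial.C (om d k)) * ∏ j ∈ (Finset.range d).erase k, (X - Polynomial.C (om d j)) := by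
    rw [poly_om d hd]
    exact (Finset.mul_prod_erase _ _ (Finset.mem_range.mpr hk)).symm
  have hgeom : (X ^ d + 1 : Polynomial ℂ) =
      (X - Polynomial.C (om d k)) * ∑ i ∈ Finset.range d, X ^ i * Polynomial.C (om d k) ^ (d-1-i) := by
    have := geom_sum₂_mul (X : Polynomial ℂ) (Polynomial.C (om d k)) d
    rw [mul_comm] at this
    rw [this]
    rw [← Polynomial.C_pow, om_pow d hd]
    simp
  have hcancel : (∏ j ∈ (Finset.range d).erase k, (X - Polynomial.C (om d j)))
      = ∑ i ∈ Finset.range d, X ^ i * Polynomial.C (om d k) ^ (d-1-i) :=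
    mul_left_cancel₀ (Polynomial.X_sub_C_ne_zero (om d k)) (hsplit.symm.trans hgeom)
  have := congrArg (Polynomial.eval (om d k)) hcancel
  simp only [Polynomial.eval_prod, Polynomial.eval_sub, Polynomial.eval_X, Polynomial.eval_C,
    Polynomial.eval_finset_sum, Polynomial.eval_mul, Polynomial.eval_pow] at this
  rw [this]
  have : ∀ i ∈ Finset.range d, om d k ^ i * om d k ^ (d-1-i) = om d k ^ (d-1) := by
    intro i hi
    rw [← pow_add]
    congr 1
    have := Finset.mem_range.mp hi
    omega
  rw [Finset.sum_congr rfl this, Finset.sum_const, Finset.card_range, nsmul_eq_mul]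

lemma key_alg (a c s : ℂ) (hs : s ≠ 0) (h : c^2 + s^2 = 1) :
    a*c/s + a*Complex.I = (c + s*Complex.I)^2 * (a*c/s - a*Complex.I) := by
  field_simp
  have hI : Complex.I^2 = -1 := Complex.I_sq
  linear_combination (-(a*(c - c*s + s*Complex.I - s^2*Complex.I)))*h + (a*(c*s^2 + s^3*Complex.I))*hI + (-(a*s*(c + s*Complex.I)))*h

lemma root_rel (d : ℕ) (hd : 0 < d) (a : ℝ) (k : ℕ) (hk : k < d) :
    ((a * Real.cos ((2*k+1)*π/(2*d)) / Real.sin ((2*k+1)*π/(2*d)) : ℝ) : ℂ) + a*Complex.I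
      = om d k * (((a * Real.cos ((2*k+1)*π/(2*d)) / Real.sin ((2*k+1)*π/(2*d)) : ℝ) : ℂ) - a*Complex.I) := by
  set th : ℝ := (2*k+1)*π/(2*d) with hth
  have hdR : (0:ℝ) < d := by exact_mod_cast hd
  have hθpos : 0 < th := by
    apply div_pos
    · positivity
    · positivity
  have hθlt : th < π := by
    rw [hth, div_lt_iff₀ (by positivity)]
    have h1 : (2*(k:ℝ)+1) < 2*d := by
      have : (k:ℝ) ≤ d - 1 := by
        have : (k:ℝ) + 1 ≤ d := by exact_mod_cast hk
        linarith
      linarith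
    nlinarith [Real.pi_pos]
  have hs : Real.sin th ≠ 0 := ne_of_gt (Real.sin_pos_of_pos_of_lt_pi hθpos hθlt)
  have hdc : (d:ℂ) ≠ 0 := Nat.cast_ne_zero.mpr hd.ne'
  have hom : om d k = ((Real.cos th : ℂ) + (Real.sin th)*Complex.I)^2 := by
    have h1 : ((Real.cos th : ℂ) + (Real.sin th)*Complex.I) = Complex.exp (th * Complex.I) := by
      rw [Complex.exp_mul_I, Complex.ofReal_cos, Complex.ofReal_sin]
    rw [h1, om, ← Complex.exp_nat_mul, sq, ← Complex.exp_add, ← Complex.exp_add]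
    congr 1
    rw [hth]
    push_cast
    field_simp
    ring
  rw [hom]
  have hsc : ((Real.sin th : ℝ) : ℂ) ≠ 0 := Complex.ofReal_ne_zero.mpr hs
  have hpy : ((Real.cos th : ℝ) : ℂ)^2 + ((Real.sin th : ℝ) : ℂ)^2 = 1 := by
    exact_mod_cast Real.cos_sq_add_sin_sq th
  have hx : ((a * Real.cos th / Real.sin th : ℝ) : ℂ) = (a:ℂ) * (Real.cos th:ℂ) / (Real.sin th:ℂ) := by
    push_cast
    ring
  rw [hx]
  exact key_alg (a : ℂ) (Real.cos th : ℂ) (Real.sin th : ℂ) hsc hpy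

lemma card_lt_pairs (d : ℕ) :
    (Finset.univ.filter (fun p : Fin d × Fin d => p.1 < p.2)).card * 2 = d * (d-1) := by
  classical
  set L := Finset.univ.filter (fun p : Fin d × Fin d => p.1 < p.2) with hL
  set G := Finset.univ.filter (fun p : Fin d × Fin d => p.2 < p.1) with hG
  have h1 : L.card = G.card := by
    apply Finset.card_bij (fun p _ => (p.2, p.1))
    · intro p hp
      simp only [hL, hG, Finset.mem_filter, Finset.mem_univ, true_and] at hp ⊢
      exact hp
    · intro p hp q hq h
      simpa [Prod.ext_iff, and_comm] using h
    · intro p hp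
      refine ⟨(p.2, p.1), ?_, rfl⟩
      simp only [hL, hG, Finset.mem_filter, Finset.mem_univ, true_and] at hp ⊢
      exact hp
  have hdisj : Disjoint L G := by
    rw [Finset.disjoint_left]
    intro p hp hq
    simp only [hL, hG, Finset.mem_filter, Finset.mem_univ, true_and] at hp hq
    exact absurd (hp.trans hq) (lt_irrefl _)
  have h2 : ((Finset.univ : Finset (Fin d × Fin d)).filter (fun p => p.1 ≠ p.2)).card = L.card + G.card := by
    have hunion : (Finset.univ : Finset (Fin d × Fin d)).filter (fun p => p.1 ≠ p.2) = L ∪ G := by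
      ext p
      simp only [hL, hG, Finset.mem_filter, Finset.mem_union, Finset.mem_univ, true_and]
      constructor
      · exact fun h => lt_or_gt_of_ne h
      · rintro (h | h)
        exacts [ne_of_lt h, ne_of_gt h]
    rw [hunion, Finset.card_union_of_disjoint hdisj]
  have h3 : (Finset.univ : Finset (Fin d × Fin d)).filter (fun p => p.1 ≠ p.2) = (Finset.univ : Finset (Fin d)).offDiag := by
    ext p
    simp [Finset.mem_offDiag]
  have h4 : ((Finset.univ : Finset (Fin d)).offDiag).card = d * d - d := by
    rw [Finset.offDiag_card]
    simp
  have h5 : d * d - d = d * (d-1) := by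
    cases d with
    | zero => simp
    | succ n => simp [Nat.succ_mul, Nat.mul_succ]
  have h34 : ((Finset.univ : Finset (Fin d × Fin d)).filter (fun p => p.1 ≠ p.2)).card = d * d - d := by
    rw [h3]
    exact h4
  omega

lemma Sk_fin (d : ℕ) (hd : 0 < d) (k : Fin d) :
    ∏ j ∈ Finset.univ.erase k, (om d ↑k - om d ↑j) = d * om d ↑k ^ (d-1) := by
  rw [← Sk d hd ↑k k.2]
  apply Finset.prod_bij (fun (j : Fin d) _ => (j:ℕ))
  · intro j hj
    simp only [Finset.mem_erase, Finset.mem_univ, and_true, Finset.mem_range] at hj ⊢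
    exact ⟨fun h => hj (Fin.ext h), j.2⟩
  · intro j₁ h₁ j₂ h₂ h
    exact Fin.ext h
  · intro m hm
    simp only [Finset.mem_erase, Finset.mem_range] at hm
    exact ⟨⟨m, hm.2⟩, by simp [Finset.mem_erase, Fin.ext_iff, hm.1], rfl⟩
  · intro j hj
    rfl

theorem lemniscate_poly (d : ℕ) (hd : 2 ≤ d) (D : ℝ) (hD1 : 1 ≤ D)
    (hD2 : D ≤ 2 ^ ((1 : ℤ) - d) * d ^ d)
    (a₀ : ℝ)
    (ha₀ : a₀ = 2 ^ (-1 + 2 / (d : ℝ)) * (d : ℝ) ^ (-(1 : ℝ) / (d - 1)) *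
      D ^ ((1 : ℝ) / (d * (d - 1)))) :
    ∃ x : Fin d → ℝ,
      (∀ z : ℂ,
        ((z + (a₀ : ℂ) * Complex.I) ^ d + (z - (a₀ : ℂ) * Complex.I) ^ d) / 2 =
          ∏ k, (z - (x k : ℂ))) ∧
      (∏ p ∈ Finset.univ.filter (fun p : Fin d × Fin d => p.1 < p.2),
          (x p.1 - x p.2) ^ 2 = D) ∧
      ‖(((a₀ : ℂ) * Complex.I + (a₀ : ℂ) * Complex.I) ^ d +
          ((a₀ : ℂ) * Complex.I - (a₀ : ℂ) * Complex.I) ^ d) / 2‖ =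
        2 * (d : ℝ) ^ (-(d : ℝ) / (d - 1)) * D ^ ((1 : ℝ) / (d - 1)) ∧
      2 * (d : ℝ) ^ (-(d : ℝ) / (d - 1)) * D ^ ((1 : ℝ) / (d - 1)) ≤ 1 := by
  classical
  have hd0 : 0 < d := by omega
  have hdR : (0:ℝ) < d := by exact_mod_cast hd0
  have hdR1 : (1:ℝ) < d := by exact_mod_cast hd
  have hd1ne : (d:ℝ) - 1 ≠ 0 := by linarith
  have hD0 : (0:ℝ) < D := by linarith
  have ha₀pos : 0 < a₀ := by rw [ha₀]; positivity
  -- the roots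
  set x : Fin d → ℝ := fun k =>
    a₀ * Real.cos ((2*(k:ℕ)+1)*π/(2*(d:ℕ))) / Real.sin ((2*(k:ℕ)+1)*π/(2*(d:ℕ))) with hxdef
  have hrel : ∀ k : Fin d, ((x k : ℝ) : ℂ) + a₀*Complex.I
      = om d ↑k * (((x k:ℝ):ℂ) - a₀*Complex.I) := fun k => root_rel d hd0 a₀ k k.2
  have hfact : ∀ (z : ℂ) (k : Fin d), (1 - om d ↑k) * (z - (x k:ℂ))
      = (z + a₀*Complex.I) - om d ↑k * (z - a₀*Complex.I) := by
    intro z k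
    linear_combination -(hrel k)
  have hone : ∏ k : Fin d, (1 - om d ↑k) = 2 := by
    rw [Fin.prod_univ_eq_prod_range (fun k => 1 - om d k) d]
    exact prod_one_sub_om d hd0
  have h2prod : ∀ z : ℂ, 2 * ∏ k : Fin d, (z - (x k:ℂ))
      = (z + a₀*Complex.I)^d + (z - a₀*Complex.I)^d := by
    intro z
    have hbig : ∏ k : Fin d, ((z + a₀*Complex.I) - om d ↑k * (z - a₀*Complex.I))
        = (z + a₀*Complex.I)^d + (z - a₀*Complex.I)^d := by
      rw [Fin.prod_univ_eq_prod_range (fun k => (z + a₀*Complex.I) - om d k * (z - a₀*Complex.I)) d]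
      exact prod_om_biv d hd0 _ _
    calc 2 * ∏ k : Fin d, (z - (x k:ℂ))
        = (∏ k : Fin d, (1 - om d ↑k)) * ∏ k : Fin d, (z - (x k:ℂ)) := by rw [hone]
      _ = ∏ k : Fin d, ((1 - om d ↑k) * (z - (x k:ℂ))) := (Finset.prod_mul_distrib).symm
      _ = ∏ k : Fin d, ((z + a₀*Complex.I) - om d ↑k * (z - a₀*Complex.I)) :=
          Finset.prod_congr rfl (fun k _ => hfact z k)
      _ = (z + a₀*Complex.I)^d + (z - a₀*Complex.I)^d := hbig
  -- part 1
  have part1 : ∀ z : ℂ,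
      ((z + (a₀ : ℂ) * Complex.I) ^ d + (z - (a₀ : ℂ) * Complex.I) ^ d) / 2 =
        ∏ k, (z - (x k : ℂ)) := by
    intro z
    linear_combination (-(1:ℂ)/2) * h2prod z
  -- rpow key
  have key : ∀ m : ℕ, a₀ ^ m = 2 ^ ((-1 + 2/(d:ℝ)) * m) * (d:ℝ) ^ ((-(1:ℝ)/((d:ℝ)-1)) * m)
      * D ^ (((1:ℝ)/((d:ℝ)*((d:ℝ)-1))) * m) := by
    intro m
    rw [ha₀, ← Real.rpow_natCast (2 ^ (-1 + 2 / (d : ℝ)) * (d : ℝ) ^ (-(1 : ℝ) / ((d:ℝ) - 1)) *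
      D ^ ((1 : ℝ) / ((d:ℝ) * ((d:ℝ) - 1)))) m]
    rw [Real.mul_rpow (by positivity) (by positivity), Real.mul_rpow (by positivity) (by positivity)]
    rw [← Real.rpow_mul (by norm_num : (0:ℝ) ≤ 2), ← Real.rpow_mul (le_of_lt hdR),
      ← Real.rpow_mul (le_of_lt hD0)]
  -- part 3 : norm value
  have hval : a₀ ^ d = 2 ^ ((2:ℝ) - d) * (d:ℝ) ^ (-(d:ℝ)/((d:ℝ)-1)) * D ^ ((1:ℝ)/((d:ℝ)-1)) := by
    rw [key d]
    have e1 : (-1 + 2/(d:ℝ)) * (d:ℕ) = 2 - (d:ℝ) := by field_simp; ring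
    have e2 : (-(1:ℝ)/((d:ℝ)-1)) * (d:ℕ) = -(d:ℝ)/((d:ℝ)-1) := by field_simp
    have e3 : ((1:ℝ)/((d:ℝ)*((d:ℝ)-1))) * (d:ℕ) = (1:ℝ)/((d:ℝ)-1) := by field_simp
    rw [e1, e2, e3]
  have part3 : ‖(((a₀ : ℂ) * Complex.I + (a₀ : ℂ) * Complex.I) ^ d +
          ((a₀ : ℂ) * Complex.I - (a₀ : ℂ) * Complex.I) ^ d) / 2‖ =
        2 * (d : ℝ) ^ (-(d : ℝ) / ((d:ℝ) - 1)) * D ^ ((1 : ℝ) / ((d:ℝ) - 1)) := by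
    have hz : ((a₀ : ℂ) * Complex.I + (a₀ : ℂ) * Complex.I) ^ d +
          ((a₀ : ℂ) * Complex.I - (a₀ : ℂ) * Complex.I) ^ d = (2*(a₀:ℂ)*Complex.I)^d := by
      rw [show (a₀:ℂ)*Complex.I - (a₀:ℂ)*Complex.I = 0 by ring, zero_pow hd0.ne',
        show (a₀:ℂ)*Complex.I + (a₀:ℂ)*Complex.I = 2*(a₀:ℂ)*Complex.I by ring, add_zero]
    rw [hz]
    rw [norm_div, norm_pow, norm_mul, norm_mul, Complex.norm_I, mul_one]
    have h2n : ‖(2:ℂ)‖ = 2 := by norm_num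
    have han : ‖((a₀:ℝ):ℂ)‖ = a₀ := by
      rw [Complex.norm_real, Real.norm_eq_abs, abs_of_pos ha₀pos]
    rw [h2n, han]
    rw [mul_pow, hval]
    have h2d : (2:ℝ)^d = 2 ^ ((d:ℕ):ℝ) := (Real.rpow_natCast 2 d).symm
    rw [h2d, show ((2:ℝ)^((d:ℕ):ℝ)) * (2 ^ ((2:ℝ) - d) * (d:ℝ) ^ (-(d:ℝ)/((d:ℝ)-1)) * D ^ ((1:ℝ)/((d:ℝ)-1))) = ((2:ℝ)^((d:ℕ):ℝ) * 2 ^ ((2:ℝ) - d)) * ((d:ℝ) ^ (-(d:ℝ)/((d:ℝ)-1)) * D ^ ((1:ℝ)/((d:ℝ)-1))) by ring,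
      ← Real.rpow_add (by norm_num : (0:ℝ) < 2)]
    rw [show ((d:ℕ):ℝ) + ((2:ℝ) - d) = 2 by push_cast; ring]
    rw [show ((2:ℝ)^(2:ℝ)) = 4 by
      rw [show (2:ℝ) = ((2:ℕ):ℝ) by norm_num, Real.rpow_natCast]; norm_num]
    ring
  -- part 4 : inequality
  have part4 : 2 * (d : ℝ) ^ (-(d : ℝ) / ((d:ℝ) - 1)) * D ^ ((1 : ℝ) / ((d:ℝ) - 1)) ≤ 1 := by
    have hD2' : D ≤ 2 ^ ((1:ℝ) - d) * (d:ℝ) ^ (d:ℕ) := by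
      have : (2:ℝ) ^ (((1:ℤ) - d : ℤ):ℝ) = 2 ^ ((1:ℤ) - d) := Real.rpow_intCast 2 _
      calc D ≤ 2 ^ ((1 : ℤ) - d) * (d:ℝ) ^ d := hD2
        _ = 2 ^ ((1:ℝ) - d) * (d:ℝ) ^ (d:ℕ) := by
            rw [← this]
            push_cast
            ring_nf
    have hexp : (0:ℝ) < (1:ℝ)/((d:ℝ)-1) := div_pos one_pos (by linarith)
    have h1 : D ^ ((1:ℝ)/((d:ℝ)-1)) ≤ (2 ^ ((1:ℝ)-d) * (d:ℝ)^(d:ℕ)) ^ ((1:ℝ)/((d:ℝ)-1)) :=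
      Real.rpow_le_rpow (le_of_lt hD0) hD2' (le_of_lt hexp)
    have h2 : ((2:ℝ) ^ ((1:ℝ)-d) * (d:ℝ)^(d:ℕ)) ^ ((1:ℝ)/((d:ℝ)-1))
        = 2⁻¹ * (d:ℝ) ^ ((d:ℝ)/((d:ℝ)-1)) := by
      rw [Real.mul_rpow (by positivity) (by positivity)]
      rw [← Real.rpow_natCast (d:ℝ) d, ← Real.rpow_mul (by norm_num : (0:ℝ) ≤ 2),
        ← Real.rpow_mul (le_of_lt hdR)]
      rw [show ((1:ℝ)-d) * ((1:ℝ)/((d:ℝ)-1)) = -1 by field_simp; ring]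
      rw [show ((d:ℕ):ℝ) * ((1:ℝ)/((d:ℝ)-1)) = (d:ℝ)/((d:ℝ)-1) by push_cast; ring]
      rw [Real.rpow_neg_one]
    rw [h2] at h1
    calc 2 * (d : ℝ) ^ (-(d : ℝ) / ((d:ℝ) - 1)) * D ^ ((1 : ℝ) / ((d:ℝ) - 1))
        ≤ 2 * (d : ℝ) ^ (-(d : ℝ) / ((d:ℝ) - 1)) * (2⁻¹ * (d:ℝ) ^ ((d:ℝ)/((d:ℝ)-1))) := by
          apply mul_le_mul_of_nonneg_left h1 (by positivity)
      _ = (d:ℝ) ^ (-(d:ℝ)/((d:ℝ)-1)) * (d:ℝ) ^ ((d:ℝ)/((d:ℝ)-1)) := by ring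
      _ = (d:ℝ) ^ (-(d:ℝ)/((d:ℝ)-1) + (d:ℝ)/((d:ℝ)-1)) := (Real.rpow_add hdR _ _).symm
      _ = 1 := by
          rw [show -(d:ℝ)/((d:ℝ)-1) + (d:ℝ)/((d:ℝ)-1) = 0 by ring, Real.rpow_zero]
  -- part 2 : discriminant
  set L : Finset (Fin d × Fin d) := Finset.univ.filter (fun p : Fin d × Fin d => p.1 < p.2) with hLdef
  set N : ℕ := L.card with hNdef
  have hNN : N * 2 = d * (d-1) := card_lt_pairs d
  have hA : ∀ (k j : Fin d), (1 - om d ↑j) * ((x k:ℂ) - x j)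
      = (om d ↑k - om d ↑j) * ((x k:ℂ) - a₀*Complex.I) := fun k j => by
    linear_combination hfact ((x k:ℂ)) j + hrel k
  have hcard_erase : ∀ k : Fin d, (Finset.univ.erase k).card = d - 1 := by
    intro k
    rw [Finset.card_erase_of_mem (Finset.mem_univ k), Finset.card_univ, Fintype.card_fin]
  have hFk : ∀ k : Fin d, 2 * ∏ j ∈ Finset.univ.erase k, ((x k:ℂ) - x j)
      = (1 - om d ↑k) * (((x k:ℂ) - a₀*Complex.I)^(d-1) * ((d:ℂ) * om d ↑k ^ (d-1))) := by
    intro k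
    have e1 : (∏ j ∈ Finset.univ.erase k, (1 - om d ↑j)) * ∏ j ∈ Finset.univ.erase k, ((x k:ℂ) - x j)
        = ((x k:ℂ) - a₀*Complex.I)^(d-1) * ((d:ℂ) * om d ↑k^(d-1)) := by
      rw [← Finset.prod_mul_distrib, Finset.prod_congr rfl (fun j _ => hA k j),
        Finset.prod_mul_distrib, Sk_fin d hd0 k, Finset.prod_const, hcard_erase k]
      ring
    have e2 : (1 - om d ↑k) * ∏ j ∈ Finset.univ.erase k, (1 - om d ↑j) = 2 := by
      rw [Finset.mul_prod_erase Finset.univ (fun j : Fin d => 1 - om d ↑j) (Finset.mem_univ k)]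
      exact hone
    calc 2 * ∏ j ∈ Finset.univ.erase k, ((x k:ℂ) - x j)
        = (1 - om d ↑k) * ((∏ j ∈ Finset.univ.erase k, (1 - om d ↑j)) *
            ∏ j ∈ Finset.univ.erase k, ((x k:ℂ) - x j)) := by rw [← mul_assoc, e2]
      _ = (1 - om d ↑k) * (((x k:ℂ) - a₀*Complex.I)^(d-1) * ((d:ℂ) * om d ↑k^(d-1))) := by rw [e1]
  have hV : 2 * ∏ k : Fin d, ((x k:ℂ) - a₀*Complex.I) = (-(2*(a₀:ℂ)*Complex.I))^d := by
    have h := h2prod ((a₀:ℂ)*Complex.I)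
    have h' : ∏ k : Fin d, ((x k:ℂ) - (a₀:ℂ)*Complex.I)
        = (-1)^d * ∏ k : Fin d, ((a₀:ℂ)*Complex.I - (x k:ℂ)) := by
      rw [show ((-1:ℂ))^d = ∏ _k : Fin d, (-1:ℂ) from by simp, ← Finset.prod_mul_distrib]
      exact Finset.prod_congr rfl fun k _ => by ring
    rw [h']
    calc 2 * ((-1)^d * ∏ k : Fin d, ((a₀:ℂ)*Complex.I - (x k:ℂ)))
        = (-1)^d * (2 * ∏ k : Fin d, ((a₀:ℂ)*Complex.I - (x k:ℂ))) := by ring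
      _ = (-1)^d * (((a₀:ℂ)*Complex.I + (a₀:ℂ)*Complex.I)^d + ((a₀:ℂ)*Complex.I - (a₀:ℂ)*Complex.I)^d) := by rw [h]
      _ = (-1)^d * (2*(a₀:ℂ)*Complex.I)^d := by
          rw [show (a₀:ℂ)*Complex.I - (a₀:ℂ)*Complex.I = 0 by ring, zero_pow hd0.ne',
            show (a₀:ℂ)*Complex.I + (a₀:ℂ)*Complex.I = 2*(a₀:ℂ)*Complex.I by ring, add_zero]
      _ = (-(2*(a₀:ℂ)*Complex.I))^d := (neg_pow _ _).symm
  -- product over all off-diagonal pairs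
  have hT : ∏ p ∈ Finset.univ.filter (fun p : Fin d × Fin d => p.1 ≠ p.2), ((x p.1:ℂ) - x p.2)
      = ∏ k : Fin d, ∏ j ∈ Finset.univ.erase k, ((x k:ℂ) - x j) := by
    rw [show (Finset.univ : Finset (Fin d × Fin d)) = Finset.univ ×ˢ Finset.univ from
      (Finset.univ_product_univ).symm]
    rw [Finset.prod_filter, Finset.prod_product]
    apply Finset.prod_congr rfl
    intro k _
    rw [← Finset.prod_filter]
    congr 1
    ext j
    simp [Finset.mem_erase, ne_comm]
  -- split off-diagonal into L and swap of L
  have hTL : ∏ p ∈ Finset.univ.filter (fun p : Fin d × Fin d => p.1 ≠ p.2), ((x p.1:ℂ) - x p.2)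
      = (-1)^N * ∏ p ∈ L, ((x p.1:ℂ) - x p.2)^2 := by
    set G : Finset (Fin d × Fin d) := Finset.univ.filter (fun p : Fin d × Fin d => p.2 < p.1) with hGdef
    have hdisj : Disjoint L G := by
      rw [Finset.disjoint_left]
      intro p hp hq
      simp only [hLdef, hGdef, Finset.mem_filter, Finset.mem_univ, true_and] at hp hq
      exact absurd (hp.trans hq) (lt_irrefl _)
    have hunion : Finset.univ.filter (fun p : Fin d × Fin d => p.1 ≠ p.2) = L ∪ G := by
      ext p
      simp only [hLdef, hGdef, Finset.mem_filter, Finset.mem_union, Finset.mem_univ, true_and]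
      constructor
      · exact fun h => lt_or_gt_of_ne h
      · rintro (h | h)
        exacts [ne_of_lt h, ne_of_gt h]
    rw [hunion, Finset.prod_union hdisj]
    have hGL : ∏ p ∈ G, ((x p.1:ℂ) - x p.2) = ∏ p ∈ L, ((x p.2:ℂ) - x p.1) := by
      apply Finset.prod_bij (fun (p : Fin d × Fin d) _ => (p.2, p.1))
      · intro p hp
        simp only [hLdef, hGdef, Finset.mem_filter, Finset.mem_univ, true_and] at hp ⊢
        exact hp
      · intro p hp q hq h
        simpa [Prod.ext_iff, and_comm] using h
      · intro p hp
        refine ⟨(p.2, p.1), ?_, rfl⟩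
        simp only [hLdef, hGdef, Finset.mem_filter, Finset.mem_univ, true_and] at hp ⊢
        exact hp
      · intro p hp
        rfl
    rw [hGL, ← Finset.prod_mul_distrib]
    rw [show ((-1:ℂ))^N = ∏ _p ∈ L, (-1:ℂ) from by rw [Finset.prod_const, hNdef],
      ← Finset.prod_mul_distrib]
    exact Finset.prod_congr rfl fun p _ => by ring
  -- combine everything
  have hbig : (2:ℂ)^d * ∏ p ∈ Finset.univ.filter (fun p : Fin d × Fin d => p.1 ≠ p.2), ((x p.1:ℂ) - x p.2)
      = 2 * ((∏ k : Fin d, ((x k:ℂ) - a₀*Complex.I))^(d-1) * ((d:ℂ)^d * (((-1):ℂ)^d)^(d-1))) := by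
    rw [hT]
    have lhs_eq : ∏ k : Fin d, (2 * ∏ j ∈ Finset.univ.erase k, ((x k:ℂ) - x j))
        = (2:ℂ)^d * ∏ k : Fin d, ∏ j ∈ Finset.univ.erase k, ((x k:ℂ) - x j) := by
      rw [Finset.prod_mul_distrib, Finset.prod_const, Finset.card_univ, Fintype.card_fin]
    have rhs_eq : ∏ k : Fin d, ((1 - om d ↑k) * (((x k:ℂ) - a₀*Complex.I)^(d-1) * ((d:ℂ) * om d ↑k ^ (d-1))))
        = 2 * ((∏ k : Fin d, ((x k:ℂ) - a₀*Complex.I))^(d-1) * ((d:ℂ)^d * (((-1):ℂ)^d)^(d-1))) := by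
      rw [Finset.prod_mul_distrib, hone, Finset.prod_mul_distrib, Finset.prod_mul_distrib,
        Finset.prod_const, Finset.card_univ, Fintype.card_fin, Finset.prod_pow,
        Finset.prod_pow]
      rw [show ∏ k : Fin d, om d ↑k = ((-1):ℂ)^d from by
        rw [Fin.prod_univ_eq_prod_range (fun k => om d k) d]; exact prod_om_eq d hd0]
      try ring
    rw [← lhs_eq, Finset.prod_congr rfl (fun k _ => hFk k), rhs_eq]
  have hC2 : ((2*(a₀:ℂ)*Complex.I))^2 = -(4*(a₀:ℂ)^2) := by
    linear_combination (4*(a₀:ℂ)^2) * Complex.I_sq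
  have hpow2 : (2:ℂ)^(d-1) * (2:ℂ)^d = 2^(2*d-1) := by
    rw [← pow_add]
    congr 1
    omega
  have hchain : (2:ℂ)^(2*d-1) * ∏ p ∈ Finset.univ.filter (fun p : Fin d × Fin d => p.1 ≠ p.2), ((x p.1:ℂ) - x p.2)
      = 2 * (d:ℂ)^d * (-(4*(a₀:ℂ)^2))^N := by
    calc (2:ℂ)^(2*d-1) * ∏ p ∈ Finset.univ.filter (fun p : Fin d × Fin d => p.1 ≠ p.2), ((x p.1:ℂ) - x p.2)
        = 2^(d-1) * ((2:ℂ)^d * ∏ p ∈ Finset.univ.filter (fun p : Fin d × Fin d => p.1 ≠ p.2), ((x p.1:ℂ) - x p.2)) := by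
          rw [← hpow2]; ring
      _ = 2^(d-1) * (2 * ((∏ k : Fin d, ((x k:ℂ) - a₀*Complex.I))^(d-1) * ((d:ℂ)^d * (((-1):ℂ)^d)^(d-1)))) := by
          rw [hbig]
      _ = 2 * (d:ℂ)^d * (((2 * ∏ k : Fin d, ((x k:ℂ) - a₀*Complex.I))^(d-1)) * (((-1):ℂ)^d)^(d-1)) := by
          rw [mul_pow]; ring
      _ = 2 * (d:ℂ)^d * (((-(2*(a₀:ℂ)*Complex.I))^d)^(d-1) * (((-1):ℂ)^d)^(d-1)) := by rw [hV]
      _ = 2 * (d:ℂ)^d * (((-(2*(a₀:ℂ)*Complex.I))^d * ((-1):ℂ)^d))^(d-1) := by rw [← mul_pow]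
      _ = 2 * (d:ℂ)^d * ((2*(a₀:ℂ)*Complex.I)^d)^(d-1) := by
          rw [show (-(2*(a₀:ℂ)*Complex.I))^d * ((-1):ℂ)^d = (2*(a₀:ℂ)*Complex.I)^d from by
            rw [← mul_pow]; congr 1; ring]
      _ = 2 * (d:ℂ)^d * (2*(a₀:ℂ)*Complex.I)^(d*(d-1)) := by rw [← pow_mul]
      _ = 2 * (d:ℂ)^d * (2*(a₀:ℂ)*Complex.I)^(2*N) := by
          congr 2
          omega
      _ = 2 * (d:ℂ)^d * (((2*(a₀:ℂ)*Complex.I)^2))^N := by rw [pow_mul]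
      _ = 2 * (d:ℂ)^d * (-(4*(a₀:ℂ)^2))^N := by rw [hC2]
  rw [hTL, show (-(4*(a₀:ℂ)^2))^N = (-1)^N * (4*(a₀:ℂ)^2)^N from neg_pow _ _] at hchain
  have hsq : ((-1:ℂ)^N) * ((-1:ℂ)^N) = 1 := by
    rw [← pow_add, ← two_mul, pow_mul]
    norm_num
  have hCfin : (2:ℂ)^(2*d-1) * ∏ p ∈ L, ((x p.1:ℂ) - x p.2)^2 = 2 * (d:ℂ)^d * (4*(a₀:ℂ)^2)^N := by
    calc (2:ℂ)^(2*d-1) * ∏ p ∈ L, ((x p.1:ℂ) - x p.2)^2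
        = ((-1)^N*(-1)^N) * ((2:ℂ)^(2*d-1) * ∏ p ∈ L, ((x p.1:ℂ) - x p.2)^2) := by rw [hsq, one_mul]
      _ = (-1)^N * ((2:ℂ)^(2*d-1) * ((-1)^N * ∏ p ∈ L, ((x p.1:ℂ) - x p.2)^2)) := by ring
      _ = (-1)^N * (2 * (d:ℂ)^d * ((-1)^N * (4*(a₀:ℂ)^2)^N)) := by rw [hchain]
      _ = ((-1)^N*(-1)^N) * (2 * (d:ℂ)^d * (4*(a₀:ℂ)^2)^N) := by ring
      _ = 2 * (d:ℂ)^d * (4*(a₀:ℂ)^2)^N := by rw [hsq, one_mul]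
  have hR : (2:ℝ)^(2*d-1) * ∏ p ∈ L, (x p.1 - x p.2)^2 = 2 * (d:ℝ)^d * (4*a₀^2)^N := by
    exact_mod_cast hCfin
  have hcast2N : ((2*N : ℕ) : ℝ) = (d:ℝ) * ((d:ℝ)-1) := by
    have h' : (2*N:ℕ) = d*(d-1) := by omega
    rw [h']
    push_cast [Nat.cast_sub (by omega : 1 ≤ d)]
    ring
  have hkey2 := key (2*N)
  rw [hcast2N] at hkey2
  rw [show (-1 + 2/(d:ℝ)) * ((d:ℝ)*((d:ℝ)-1)) = (2-(d:ℝ))*((d:ℝ)-1) from by field_simp; ring,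
    show (-(1:ℝ)/((d:ℝ)-1)) * ((d:ℝ)*((d:ℝ)-1)) = -(d:ℝ) from by field_simp,
    show ((1:ℝ)/((d:ℝ)*((d:ℝ)-1))) * ((d:ℝ)*((d:ℝ)-1)) = 1 from by field_simp,
    Real.rpow_one] at hkey2
  have harith : 2 * (d:ℝ)^d * (4*a₀^2)^N = 2^(2*d-1) * D := by
    rw [show (4:ℝ)*a₀^2 = (2^2)*a₀^2 from by norm_num, mul_pow, ← pow_mul, ← pow_mul, hkey2]
    rw [show ((d:ℝ))^(d:ℕ) = (d:ℝ)^((d:ℕ):ℝ) from (Real.rpow_natCast _ _).symm,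
        show ((2:ℝ))^(2*N:ℕ) = (2:ℝ)^((2*N:ℕ):ℝ) from (Real.rpow_natCast _ _).symm,
        show ((2:ℝ))^(2*d-1:ℕ) = (2:ℝ)^((2*d-1:ℕ):ℝ) from (Real.rpow_natCast _ _).symm,
        hcast2N]
    rw [show ((2*d-1:ℕ):ℝ) = 2*(d:ℝ)-1 from by push_cast [Nat.cast_sub (by omega : 1 ≤ 2*d)]; ring]
    rw [show (2:ℝ) * (d:ℝ)^((d:ℕ):ℝ) * ((2:ℝ)^((d:ℝ)*((d:ℝ)-1)) * ((2:ℝ)^((2-(d:ℝ))*((d:ℝ)-1)) * (d:ℝ)^(-(d:ℝ)) * D))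
        = ((d:ℝ)^((d:ℕ):ℝ) * (d:ℝ)^(-(d:ℝ))) * ((2:ℝ)^(1:ℝ) * (2:ℝ)^((d:ℝ)*((d:ℝ)-1)) * (2:ℝ)^((2-(d:ℝ))*((d:ℝ)-1))) * D from by
          rw [Real.rpow_one]; ring]
    rw [← Real.rpow_add hdR, ← Real.rpow_add (by norm_num : (0:ℝ) < 2),
      ← Real.rpow_add (by norm_num : (0:ℝ) < 2)]
    rw [show ((d:ℕ):ℝ) + -(d:ℝ) = 0 from by push_cast; ring, Real.rpow_zero, one_mul]
    rw [show (1:ℝ) + (d:ℝ)*((d:ℝ)-1) + (2-(d:ℝ))*((d:ℝ)-1) = 2*(d:ℝ)-1 from by ring]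
  have part2 : ∏ p ∈ L, (x p.1 - x p.2)^2 = D := by
    have h2ne : ((2:ℝ)^(2*d-1)) ≠ 0 := by positivity
    apply mul_left_cancel₀ h2ne
    rw [hR, harith]
  exact ⟨x, part1, part2, part3, part4⟩
end

section
/- Let a > 0, d ≥ 2, and let x₁, …, x_d be real points with counting measure τ_d = (1/d)∑ δ_{x_k}. If the potential U^{τ_d}(ai) = −(1/d)∑_k log|ai − x_k| equals v, then the discrete energy I[τ_d] = −(1/(d(d−1)))∑_{j≠k} log|x_j − x_k| satisfies I[τ_d] ≥ 2v + log(2a) − (log d)/(d−1). -/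
open Real Finset Matrix
open scoped ComplexOrder

lemma amgm_prod {n : ℕ} (hn : 0 < n) (lam : Fin n → ℝ) (h0 : ∀ i, 0 ≤ lam i) :
    ∏ i, lam i ≤ ((∑ i, lam i) / n) ^ n := by
  have hn' : (n : ℝ) ≠ 0 := Nat.cast_ne_zero.mpr hn.ne'
  have h := Real.geom_mean_le_arith_mean_weighted Finset.univ (fun _ => (n : ℝ)⁻¹) lam
    (fun i _ => by positivity) (by simp [Finset.card_univ, mul_comm]; field_simp)
    (fun i _ => h0 i)
  have hprod : (∏ i, lam i ^ ((n : ℝ)⁻¹)) ^ n = ∏ i, lam i := by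
    rw [← Finset.prod_pow]
    refine Finset.prod_congr rfl fun i _ => ?_
    rw [← Real.rpow_natCast (lam i ^ ((n:ℝ)⁻¹)) n, ← Real.rpow_mul (h0 i),
      inv_mul_cancel₀ hn', Real.rpow_one]
  calc ∏ i, lam i = (∏ i, lam i ^ ((n : ℝ)⁻¹)) ^ n := hprod.symm
    _ ≤ (∑ i, (n:ℝ)⁻¹ * lam i) ^ n := by
        apply pow_le_pow_left₀ (Finset.prod_nonneg fun i _ => Real.rpow_nonneg (h0 i) _) h
    _ = ((∑ i, lam i) / n) ^ n := by rw [← Finset.mul_sum]; ring_nf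

lemma vandermonde_bound {d : ℕ} (hd : 0 < d) (z : Fin d → ℂ) (hz : ∀ k, ‖z k‖ = 1) :
    (∏ i, ∏ j ∈ Finset.Ioi i, ‖z j - z i‖) ^ 2 ≤ (d : ℝ) ^ d := by
  set V := Matrix.vandermonde z with hV
  have hps : (V * Vᴴ).PosSemidef := Matrix.posSemidef_self_mul_conjTranspose V
  have hH : (V * Vᴴ).IsHermitian := hps.1
  set lam := hH.eigenvalues with hlam
  have h0 : ∀ i, 0 ≤ lam i := hps.eigenvalues_nonneg
  -- trace = d^2
  have hdiag : ∀ i, (V * Vᴴ) i i = (d : ℂ) := by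
    intro i
    rw [Matrix.mul_apply]
    simp only [Matrix.conjTranspose_apply, Complex.star_def]
    have : ∀ m : Fin d, V i m * (starRingEnd ℂ) (V i m) = 1 := by
      intro m
      rw [Complex.mul_conj']
      rw [hV, Matrix.vandermonde]
      norm_cast
      rw [Matrix.of_apply, norm_pow, hz i, one_pow]
      norm_num
    simp [this, Finset.card_univ]
  have htr1 : (V * Vᴴ).trace = ((d : ℂ) * d) := by
    rw [Matrix.trace]
    simp [Matrix.diag, hdiag, Finset.card_univ]
  -- trace = sum of eigenvalues
  have htr2 : (V * Vᴴ).trace = ∑ i, (lam i : ℂ) := by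
    conv_lhs => rw [hH.spectral_theorem, Unitary.conjStarAlgAut_apply]
    rw [Matrix.trace_mul_comm, ← mul_assoc]
    rw [show (star (hH.eigenvectorUnitary : Matrix (Fin d) (Fin d) ℂ)) *
        (hH.eigenvectorUnitary : Matrix (Fin d) (Fin d) ℂ) = 1 from
      Unitary.coe_star_mul_self _, one_mul]
    simp [Matrix.trace, Function.comp, hlam]
  have hsum : ∑ i, lam i = (d : ℝ) * d := by
    have h := htr1.symm.trans htr2
    exact_mod_cast h.symm
  -- det
  have hdet1 : (V * Vᴴ).det = ∏ i, (lam i : ℂ) := hH.det_eq_prod_eigenvalues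
  have hdet2 : (V * Vᴴ).det = ((‖V.det‖ ^ 2 : ℝ) : ℂ) := by
    rw [Matrix.det_mul, Matrix.det_conjTranspose, Complex.star_def, Complex.mul_conj']
    norm_cast
  have hprodlam : ‖V.det‖ ^ 2 = ∏ i, lam i := by
    have h := hdet2.symm.trans hdet1
    exact_mod_cast h
  have hVdet : ‖V.det‖ = ∏ i, ∏ j ∈ Finset.Ioi i, ‖z j - z i‖ := by
    rw [hV, Matrix.det_vandermonde, norm_prod]
    exact Finset.prod_congr rfl fun i _ => norm_prod _ _
  rw [← hVdet, hprodlam]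
  calc ∏ i, lam i ≤ ((∑ i, lam i) / d) ^ d := amgm_prod hd lam h0
    _ = (d : ℝ) ^ d := by
        rw [hsum]
        congr 1
        field_simp

lemma sum_pairs_ne {d : ℕ} (f : Fin d × Fin d → ℝ) (hsym : ∀ i j, f (i, j) = f (j, i)) :
    ∑ p ∈ Finset.univ.filter (fun p : Fin d × Fin d => p.1 ≠ p.2), f p
      = 2 * ∑ i, ∑ j ∈ Finset.Ioi i, f (i, j) := by
  have hsplit : Finset.univ.filter (fun p : Fin d × Fin d => p.1 ≠ p.2)
      = Finset.univ.filter (fun p : Fin d × Fin d => p.1 < p.2)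
        ∪ Finset.univ.filter (fun p : Fin d × Fin d => p.2 < p.1) := by
    ext p
    simp only [Finset.mem_filter, Finset.mem_union, Finset.mem_univ, true_and]
    exact ne_iff_lt_or_gt
  have hdisj : Disjoint (Finset.univ.filter (fun p : Fin d × Fin d => p.1 < p.2))
      (Finset.univ.filter (fun p : Fin d × Fin d => p.2 < p.1)) := by
    rw [Finset.disjoint_left]
    intro p hp hq
    simp only [Finset.mem_filter] at hp hq
    exact lt_asymm hp.2 hq.2
  have h2 : ∑ p ∈ Finset.univ.filter (fun p : Fin d × Fin d => p.2 < p.1), f p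
      = ∑ p ∈ Finset.univ.filter (fun p : Fin d × Fin d => p.1 < p.2), f p := by
    refine Finset.sum_nbij' Prod.swap Prod.swap ?_ ?_ ?_ ?_ ?_ <;>
      simp +contextual [Prod.swap, hsym]
  have h3 : ∑ p ∈ Finset.univ.filter (fun p : Fin d × Fin d => p.1 < p.2), f p
      = ∑ i, ∑ j ∈ Finset.Ioi i, f (i, j) := by
    rw [Finset.sum_filter, Fintype.sum_prod_type]
    refine Finset.sum_congr rfl fun i _ => ?_
    rw [show Finset.Ioi i = Finset.univ.filter (fun j => i < j) by ext; simp,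
      Finset.sum_filter]
  rw [hsplit, Finset.sum_union hdisj, h2, h3]
  ring

lemma sum_ne_fst {d : ℕ} (hd : 1 ≤ d) (f : Fin d → ℝ) :
    ∑ p ∈ Finset.univ.filter (fun p : Fin d × Fin d => p.1 ≠ p.2), f p.1
      = ((d : ℝ) - 1) * ∑ i, f i := by
  rw [Finset.sum_filter, Fintype.sum_prod_type]
  have key : ∀ i : Fin d, (∑ j : Fin d, if i ≠ j then f i else 0) = ((d : ℝ) - 1) * f i := by
    intro i
    rw [← Finset.sum_filter, Finset.filter_ne, Finset.sum_const,
      Finset.card_erase_of_mem (Finset.mem_univ i), Finset.card_univ, Fintype.card_fin,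
      nsmul_eq_mul, Nat.cast_sub hd, Nat.cast_one]
  rw [Finset.sum_congr rfl fun i _ => key i, ← Finset.mul_sum]

lemma sum_ne_snd {d : ℕ} (hd : 1 ≤ d) (f : Fin d → ℝ) :
    ∑ p ∈ Finset.univ.filter (fun p : Fin d × Fin d => p.1 ≠ p.2), f p.2
      = ((d : ℝ) - 1) * ∑ i, f i := by
  rw [Finset.sum_filter, Fintype.sum_prod_type, Finset.sum_comm]
  have key : ∀ j : Fin d, (∑ i : Fin d, if i ≠ j then f j else 0) = ((d : ℝ) - 1) * f j := by
    intro j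
    rw [← Finset.sum_filter, Finset.filter_ne', Finset.sum_const,
      Finset.card_erase_of_mem (Finset.mem_univ j), Finset.card_univ, Fintype.card_fin,
      nsmul_eq_mul, Nat.cast_sub hd, Nat.cast_one]
  rw [Finset.sum_congr rfl fun j _ => key j, ← Finset.mul_sum]

lemma card_ne_filter {d : ℕ} :
    (Finset.univ.filter (fun p : Fin d × Fin d => p.1 ≠ p.2)).card = d * d - d := by
  rw [show Finset.univ.filter (fun p : Fin d × Fin d => p.1 ≠ p.2)
      = (Finset.univ : Finset (Fin d)).offDiag by ext p; simp [Finset.mem_offDiag],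
    Finset.offDiag_card, Finset.card_univ, Fintype.card_fin]

theorem energy_bound (d : ℕ) (hd : 2 ≤ d) (a v : ℝ) (ha : 0 < a)
    (x : Fin d → ℝ) (hx : Function.Injective x)
    (hv : -(1 / (d : ℝ)) * ∑ k, Real.log ‖(a : ℂ) * Complex.I - (x k : ℂ)‖ = v) :
    -(1 / ((d : ℝ) * (d - 1))) *
        ∑ p ∈ Finset.univ.filter (fun p : Fin d × Fin d => p.1 ≠ p.2),
          Real.log |x p.1 - x p.2| ≥
      2 * v + Real.log (2 * a) - Real.log d / (d - 1) := by
  have hd0 : 0 < d := by omega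
  have hd1 : 1 ≤ d := by omega
  have hD2 : (2:ℝ) ≤ (d:ℝ) := by exact_mod_cast hd
  have hD0 : (0:ℝ) < (d:ℝ) := by linarith
  have hD1 : (0:ℝ) < (d:ℝ) - 1 := by linarith
  set w : Fin d → ℂ := fun k => ((x k : ℂ) - a * Complex.I) / ((x k : ℂ) + a * Complex.I) with hw
  have hden : ∀ k, ((x k : ℂ) + a * Complex.I) ≠ 0 := by
    intro k h
    have h2 := congrArg Complex.im h
    simp at h2
    exact ha.ne' h2
  have hsubne : ∀ k, ((a : ℂ) * Complex.I - (x k : ℂ)) ≠ 0 := by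
    intro k h
    have h2 := congrArg Complex.im h
    simp at h2
    exact ha.ne' h2
  have hA0 : ∀ k, (0:ℝ) < ‖(a : ℂ) * Complex.I - (x k : ℂ)‖ :=
    fun k => norm_pos_iff.mpr (hsubne k)
  have hnorm1 : ∀ k, ‖(x k : ℂ) + a * Complex.I‖ = ‖(a : ℂ) * Complex.I - (x k : ℂ)‖ := by
    intro k
    rw [show (a : ℂ) * Complex.I - (x k : ℂ)
        = -((starRingEnd ℂ) ((x k : ℂ) + a * Complex.I)) by
      simp [Complex.ext_iff]]
    rw [norm_neg, RCLike.norm_conj]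
  have hnorm2 : ∀ k, ‖(x k : ℂ) - a * Complex.I‖ = ‖(a : ℂ) * Complex.I - (x k : ℂ)‖ := by
    intro k
    rw [show (a : ℂ) * Complex.I - (x k : ℂ) = -((x k : ℂ) - a * Complex.I) by ring, norm_neg]
  have hwnorm : ∀ k, ‖w k‖ = 1 := by
    intro k
    simp only [hw]
    rw [norm_div, hnorm1, hnorm2, div_self (hA0 k).ne']
  have hwsub : ∀ j k, w j - w k
      = (2 * (a:ℂ) * Complex.I * ((x j : ℂ) - (x k : ℂ)))
        / (((x j : ℂ) + a * Complex.I) * ((x k : ℂ) + a * Complex.I)) := by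
    intro j k
    simp only [hw]
    field_simp [hden j, hden k]
    ring
  have hwinj : ∀ j k, j ≠ k → w j ≠ w k := by
    intro j k hjk h
    have h0 : w j - w k = 0 := sub_eq_zero.mpr h
    rw [hwsub, div_eq_zero_iff] at h0
    rcases h0 with h0 | h0
    · have : ((x j : ℂ) - (x k : ℂ)) = 0 := by
        rcases mul_eq_zero.mp h0 with h1 | h1
        · exfalso
          rcases mul_eq_zero.mp h1 with h2 | h2
          · rcases mul_eq_zero.mp h2 with h3 | h3
            · norm_num at h3
            · exact ha.ne' (by exact_mod_cast h3)
          · exact Complex.I_ne_zero h2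
        · exact h1
      have : (x j : ℂ) = (x k : ℂ) := sub_eq_zero.mp this
      exact hjk (hx (by exact_mod_cast this))
    · exact mul_ne_zero (hden j) (hden k) h0
  have hwdist : ∀ j k, ‖w j - w k‖
      = 2 * a * |x j - x k|
        / (‖(a : ℂ) * Complex.I - (x j : ℂ)‖ * ‖(a : ℂ) * Complex.I - (x k : ℂ)‖) := by
    intro j k
    rw [hwsub, norm_div]
    simp only [norm_mul, hnorm1]
    congr 1
    rw [show ((x j : ℂ) - (x k : ℂ)) = ((x j - x k : ℝ) : ℂ) by push_cast; ring]
    simp only [Complex.norm_real, Complex.norm_I, Real.norm_eq_abs]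
    rw [abs_of_pos ha]
    norm_num
  have habs : ∀ j k, |x j - x k|
      = ‖(a : ℂ) * Complex.I - (x j : ℂ)‖ * ‖(a : ℂ) * Complex.I - (x k : ℂ)‖
        * ‖w j - w k‖ / (2 * a) := by
    intro j k
    have h1 : ‖(a : ℂ) * Complex.I - (x j : ℂ)‖ ≠ 0 := by
      exact (hA0 j).ne'
    have h2 : ‖(a : ℂ) * Complex.I - (x k : ℂ)‖ ≠ 0 := by
      exact (hA0 k).ne'
    rw [hwdist]
    field_simp [h1, h2]
  have hlogterm : ∀ p ∈ Finset.univ.filter (fun p : Fin d × Fin d => p.1 ≠ p.2),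
      Real.log |x p.1 - x p.2|
        = (Real.log ‖(a : ℂ) * Complex.I - (x p.1 : ℂ)‖
            + Real.log ‖(a : ℂ) * Complex.I - (x p.2 : ℂ)‖
            + Real.log ‖w p.1 - w p.2‖) - Real.log (2 * a) := by
    intro p hp
    simp only [Finset.mem_filter] at hp
    have hwne : w p.1 - w p.2 ≠ 0 := sub_ne_zero.mpr (hwinj _ _ hp.2)
    rw [habs p.1 p.2,
      Real.log_div (mul_ne_zero (mul_ne_zero (hA0 p.1).ne' (hA0 p.2).ne')
        (norm_ne_zero_iff.mpr hwne)) (by positivity),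
      Real.log_mul (mul_ne_zero (hA0 p.1).ne' (hA0 p.2).ne')
        (norm_ne_zero_iff.mpr hwne),
      Real.log_mul (hA0 p.1).ne' (hA0 p.2).ne']
  -- decompose the sum
  have hSv : ∑ k, Real.log ‖(a : ℂ) * Complex.I - (x k : ℂ)‖ = -((d:ℝ) * v) := by
    rw [← hv]
    field_simp
  set L := ∑ i, ∑ j ∈ Finset.Ioi i, Real.log ‖w i - w j‖ with hL
  have HS : ∑ p ∈ Finset.univ.filter (fun p : Fin d × Fin d => p.1 ≠ p.2),
      Real.log |x p.1 - x p.2|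
      = 2 * ((d:ℝ) - 1) * (-((d:ℝ) * v)) + 2 * L - ((d:ℝ) * (d:ℝ) - (d:ℝ)) * Real.log (2*a) := by
    rw [Finset.sum_congr rfl hlogterm, Finset.sum_sub_distrib, Finset.sum_add_distrib,
      Finset.sum_add_distrib]
    rw [sum_ne_fst hd1 (fun i => Real.log ‖(a : ℂ) * Complex.I - (x i : ℂ)‖),
      sum_ne_snd hd1 (fun i => Real.log ‖(a : ℂ) * Complex.I - (x i : ℂ)‖),
      sum_pairs_ne (fun p => Real.log ‖w p.1 - w p.2‖) (fun i j => by simp [norm_sub_rev]),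
      Finset.sum_const, card_ne_filter, nsmul_eq_mul, hSv]
    rw [Nat.cast_sub (Nat.le_mul_of_pos_left d hd0), Nat.cast_mul]
    ring
  -- bound on L
  set B := ∏ i, ∏ j ∈ Finset.Ioi i, ‖w j - w i‖ with hB
  have hBpos' : ∀ i, ∀ j ∈ Finset.Ioi i, (0:ℝ) < ‖w j - w i‖ := by
    intro i j hj
    exact norm_pos_iff.mpr (sub_ne_zero.mpr (hwinj j i (ne_of_gt (Finset.mem_Ioi.mp hj))))
  have hBpos : 0 < B :=
    Finset.prod_pos fun i _ => Finset.prod_pos fun j hj => hBpos' i j hj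
  have hLB : L = Real.log B := by
    rw [hB, Real.log_prod (fun i _ =>
      (Finset.prod_pos fun j hj => hBpos' i j hj).ne')]
    refine Finset.sum_congr rfl fun i _ => ?_
    rw [Real.log_prod (fun j hj => (hBpos' i j hj).ne')]
    exact Finset.sum_congr rfl fun j hj => by rw [norm_sub_rev]
  have hbound : 2 * L ≤ (d:ℝ) * Real.log d := by
    have h1 := vandermonde_bound hd0 w hwnorm
    rw [← hB] at h1
    have h2 : Real.log (B ^ 2) ≤ Real.log ((d:ℝ) ^ d) :=
      Real.log_le_log (by positivity) h1
    rw [Real.log_pow, Real.log_pow] at h2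
    rw [hLB]
    push_cast at h2
    linarith
  -- final arithmetic
  rw [HS]
  have hne : (d:ℝ) ≠ 0 := hD0.ne'
  have hne1 : (d:ℝ) - 1 ≠ 0 := hD1.ne'
  have heq : -(1 / ((d : ℝ) * ((d:ℝ) - 1))) *
      (2 * ((d:ℝ) - 1) * (-((d:ℝ) * v)) + 2 * L - ((d:ℝ) * (d:ℝ) - (d:ℝ)) * Real.log (2*a))
      = 2 * v + Real.log (2 * a) - 2 * L / ((d:ℝ) * ((d:ℝ) - 1)) := by
    field_simp
    ring
  rw [heq]
  have hfin : 2 * L / ((d:ℝ) * ((d:ℝ) - 1)) ≤ Real.log d / ((d:ℝ) - 1) := by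
    rw [div_le_div_iff₀ (by positivity) hD1]
    nlinarith [hbound, hD1.le]
  linarith
end
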